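/- arXiv:2301.11556 — 8 statements merged into one kernel-verified Lean document; each statement's English description precedes it below -/
import Mathlib

section
/- Let n ≥ 1 and let S_1, …, S_{n+1} be exchangeable real-valued random variables that are almost surely pairwise distinct, i.e., P(S_i = S_j) = 0 for all i ≠ j. Define the conformal p-value û = (1 + #{i ∈ {1, …, n} : S_i ≤ S_{n+1}}) / (n+1). Then û is uniformly distributed on the grid {1/(n+1), 2/(n+1), …, 1}: for every k ∈ {1, …, n+1}, P(û = k/(n+1)) = 1/(n+1). -/
open MeasureTheory
open scoped ENNReal

lemma card_filter_perm_aux {m : ℕ} (σ : Equiv.Perm (Fin m)) (p : Fin m → Prop)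
    [DecidablePred p] :
    (Finset.univ.filter fun i => p (σ i)).card = (Finset.univ.filter p).card := by
  rw [← Finset.card_map σ.toEmbedding]
  congr 1
  ext j
  simp only [Finset.mem_map, Finset.mem_filter, Finset.mem_univ, true_and,
    Equiv.coe_toEmbedding]
  constructor
  · rintro ⟨i, hi, rfl⟩; exact hi
  · intro hj; exact ⟨σ.symm j, by simpa using hj, σ.apply_symm_apply j⟩

lemma rank_inj {m : ℕ} (x : Fin m → ℝ) (hx : Function.Injective x) :
    Function.Injective fun j => (Finset.univ.filter fun i => x i ≤ x j).card := by
  have key : ∀ a b : Fin m, x a < x b →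
      (Finset.univ.filter fun i => x i ≤ x a).card <
      (Finset.univ.filter fun i => x i ≤ x b).card := by
    intro a b hlt
    apply Finset.card_lt_card
    rw [Finset.ssubset_def]
    constructor
    · intro i hi
      simp only [Finset.mem_filter, Finset.mem_univ, true_and] at hi ⊢
      exact hi.trans hlt.le
    · intro hsub
      have hb : b ∈ (Finset.univ.filter fun i => x i ≤ x b) := by simp
      have := hsub hb
      simp only [Finset.mem_filter, Finset.mem_univ, true_and] at this
      exact absurd this (not_le.mpr hlt)
  intro j j' h
  by_contra hne
  rcases lt_or_gt_of_ne (fun e => hne (hx e)) with hlt | hlt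
  · exact absurd h (key j j' hlt).ne
  · exact absurd h.symm (key j' j hlt).ne

lemma rank_exists_unique {m : ℕ} (x : Fin m → ℝ) (hx : Function.Injective x)
    (k : ℕ) (hk : k ∈ Finset.Icc 1 m) :
    ∃! j : Fin m, (Finset.univ.filter fun i => x i ≤ x j).card = k := by
  set r : Fin m → ℕ := fun j => (Finset.univ.filter fun i => x i ≤ x j).card with hr
  have hinj : Function.Injective r := rank_inj x hx
  have himg : Finset.image r Finset.univ = Finset.Icc 1 m := by
    apply Finset.eq_of_subset_of_card_le
    · intro a ha
      obtain ⟨j, -, rfl⟩ := Finset.mem_image.mp ha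
      refine Finset.mem_Icc.mpr ⟨?_, ?_⟩
      · exact Finset.card_pos.mpr ⟨j, by simp⟩
      · exact (Finset.card_filter_le _ _).trans (by simp)
    · rw [Finset.card_image_of_injective _ hinj, Finset.card_univ, Fintype.card_fin,
        Nat.card_Icc]
      omega
  have hkmem : k ∈ Finset.image r Finset.univ := himg ▸ hk
  obtain ⟨j, -, hj⟩ := Finset.mem_image.mp hkmem
  exact ⟨j, hj, fun j' hj' => hinj (hj'.trans hj.symm)⟩

/-- If the exchangeable scores are almost surely pairwise distinct,
the conformal p-value is uniformly distributed on `{1/(n+1), …, 1}`. -/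
theorem conformal_pvalue_uniform
    {Ω : Type*} [MeasurableSpace Ω] (P : Measure Ω) [IsProbabilityMeasure P]
    (n : ℕ) (hn : 1 ≤ n)
    (S : Fin (n + 1) → Ω → ℝ) (hS : ∀ i, Measurable (S i))
    (hexch : ∀ σ : Equiv.Perm (Fin (n + 1)),
      P.map (fun ω => fun i => S (σ i) ω) = P.map (fun ω => fun i => S i ω))
    (hdist : ∀ i j : Fin (n + 1), i ≠ j → P {ω | S i ω = S j ω} = 0)
    (k : ℕ) (hk : k ∈ Finset.Icc 1 (n + 1)) :
    P {ω | (1 + ((Finset.univ.filter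
          (fun i : Fin n => S i.castSucc ω ≤ S (Fin.last n) ω)).card : ℝ)) / (n + 1)
        = (k : ℝ) / (n + 1)}
      = 1 / ((n : ℝ≥0∞) + 1) := by
  classical
  -- the rank-based events
  set A : Fin (n + 1) → Set Ω := fun j =>
    {ω | (Finset.univ.filter fun i => S i ω ≤ S j ω).card = k} with hA
  -- measurability of the rank functions
  have hrk_meas : ∀ j : Fin (n + 1),
      Measurable fun ω => (Finset.univ.filter fun i => S i ω ≤ S j ω).card := by
    intro j
    simp only [Finset.card_filter]
    exact Finset.measurable_sum _ fun i _ =>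
      Measurable.ite (measurableSet_le (hS i) (hS j)) measurable_const measurable_const
  have hA_meas : ∀ j, MeasurableSet (A j) := fun j =>
    (hrk_meas j) (measurableSet_singleton k)
  -- all events A j have the same measure, by exchangeability
  have hmeasf : Measurable fun ω => fun i => S i ω := measurable_pi_lambda _ hS
  have hG_meas : MeasurableSet {x : Fin (n+1) → ℝ |
      (Finset.univ.filter fun i => x i ≤ x (Fin.last n)).card = k} := by
    have : Measurable fun x : Fin (n+1) → ℝ =>
        (Finset.univ.filter fun i => x i ≤ x (Fin.last n)).card := by
      simp only [Finset.card_filter]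
      exact Finset.measurable_sum _ fun i _ =>
        Measurable.ite (measurableSet_le (measurable_pi_apply i)
          (measurable_pi_apply (Fin.last n))) measurable_const measurable_const
    exact this (measurableSet_singleton k)
  have hAeq : ∀ j : Fin (n + 1), P (A j) = P (A (Fin.last n)) := by
    intro j
    set σ : Equiv.Perm (Fin (n+1)) := Equiv.swap j (Fin.last n) with hσ
    have hmeasfσ : Measurable fun ω => fun i => S (σ i) ω :=
      measurable_pi_lambda _ fun i => hS (σ i)
    have h1 := hexch σ
    have h2 : (P.map fun ω => fun i => S (σ i) ω) {x : Fin (n+1) → ℝ |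
        (Finset.univ.filter fun i => x i ≤ x (Fin.last n)).card = k}
        = (P.map fun ω => fun i => S i ω) {x : Fin (n+1) → ℝ |
        (Finset.univ.filter fun i => x i ≤ x (Fin.last n)).card = k} := by rw [h1]
    rw [Measure.map_apply hmeasfσ hG_meas, Measure.map_apply hmeasf hG_meas] at h2
    have hpre1 : (fun ω => fun i => S (σ i) ω) ⁻¹' {x : Fin (n+1) → ℝ |
        (Finset.univ.filter fun i => x i ≤ x (Fin.last n)).card = k} = A j := by
      ext ω
      simp only [Set.mem_preimage, Set.mem_setOf_eq, hA]
      rw [card_filter_perm_aux σ (fun i => S i ω ≤ S (σ (Fin.last n)) ω)]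
      have : σ (Fin.last n) = j := Equiv.swap_apply_right j (Fin.last n)
      rw [this]
    have hpre2 : (fun ω => fun i => S i ω) ⁻¹' {x : Fin (n+1) → ℝ |
        (Finset.univ.filter fun i => x i ≤ x (Fin.last n)).card = k} = A (Fin.last n) := by
      ext ω; simp [hA]
    rw [hpre1, hpre2] at h2
    exact h2
  -- the almost sure event of distinct values
  set D : Set Ω := {ω | ∀ i j : Fin (n+1), i ≠ j → S i ω ≠ S j ω} with hD
  have hD_meas : MeasurableSet D := by
    have : D = ⋂ (i) (j), {ω | i ≠ j → S i ω ≠ S j ω} := by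
      ext ω; simp [hD]
    rw [this]
    refine MeasurableSet.iInter fun i => MeasurableSet.iInter fun j => ?_
    by_cases h : i = j
    · simp [h]
    · have : {ω | i ≠ j → S i ω ≠ S j ω} = {ω | S i ω = S j ω}ᶜ := by
        ext ω; simp [h]
      rw [this]
      exact (measurableSet_eq_fun (hS i) (hS j)).compl
  have hDc : P Dᶜ = 0 := by
    have hsub : Dᶜ ⊆ ⋃ (i) (j), {ω | i ≠ j ∧ S i ω = S j ω} := by
      intro ω hω
      simp only [hD, Set.mem_compl_iff, Set.mem_setOf_eq, not_forall] at hω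
      obtain ⟨i, j, hij, hEq⟩ := hω
      simp only [Set.mem_iUnion, Set.mem_setOf_eq]
      exact ⟨i, j, hij, not_not.mp hEq⟩
    refine measure_mono_null hsub ?_
    refine measure_iUnion_null fun i => measure_iUnion_null fun j => ?_
    by_cases h : i = j
    · have : {ω | i ≠ j ∧ S i ω = S j ω} = ∅ := by ext ω; simp [h]
      simp [this]
    · exact measure_mono_null (fun ω hω => hω.2) (hdist i j h)
  have hPD : P D = 1 := by
    have := prob_compl_eq_zero_iff hD_meas |>.mp hDc
    exact this
  -- on D, exactly one j has rank k
  have hpart : ∀ ω ∈ D, ∃! j : Fin (n+1),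
      (Finset.univ.filter fun i => S i ω ≤ S j ω).card = k := by
    intro ω hω
    refine rank_exists_unique (fun i => S i ω) ?_ k hk
    intro i j h
    by_contra hne
    exact hω i j hne h
  -- hence the A j ∩ D partition D
  have hcover : ⋃ j, (A j ∩ D) = D := by
    ext ω
    simp only [Set.mem_iUnion, Set.mem_inter_iff]
    constructor
    · rintro ⟨j, -, hωD⟩; exact hωD
    · intro hωD
      obtain ⟨j, hj, -⟩ := hpart ω hωD
      exact ⟨j, hj, hωD⟩
  have hdisj : Pairwise (Function.onFun Disjoint fun j => A j ∩ D) := by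
    intro j j' hne
    refine Set.disjoint_left.mpr ?_
    rintro ω ⟨hωj, hωD⟩ ⟨hωj', -⟩
    obtain ⟨j₀, -, huniq⟩ := hpart ω hωD
    exact hne ((huniq j hωj).trans (huniq j' hωj').symm)
  have hsum : ∑ j : Fin (n+1), P (A j ∩ D) = 1 := by
    have hμ := measure_iUnion (μ := P) hdisj fun j => (hA_meas j).inter hD_meas
    rw [hcover, hPD, tsum_fintype] at hμ
    exact hμ.symm
  have hAD : ∀ j, P (A j ∩ D) = P (A j) := fun j =>
    measure_inter_conull hDc
  have hfin : (↑(n+1) : ℝ≥0∞) * P (A (Fin.last n)) = 1 := by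
    calc (↑(n+1) : ℝ≥0∞) * P (A (Fin.last n))
        = ∑ _j : Fin (n+1), P (A (Fin.last n)) := by
          rw [Finset.sum_const, Finset.card_univ, Fintype.card_fin, nsmul_eq_mul]
      _ = ∑ j : Fin (n+1), P (A j ∩ D) := by
          refine Finset.sum_congr rfl fun j _ => ?_
          rw [hAD j, hAeq j]
      _ = 1 := hsum
  have hPlast : P (A (Fin.last n)) = 1 / ((n : ℝ≥0∞) + 1) := by
    rw [ENNReal.eq_div_iff (by simp) (by simp),
      show ((n : ℝ≥0∞) + 1) = ((n + 1 : ℕ) : ℝ≥0∞) by push_cast; ring]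
    exact hfin
  -- the event in the statement equals A (last n)
  have hset : {ω | (1 + ((Finset.univ.filter
          (fun i : Fin n => S i.castSucc ω ≤ S (Fin.last n) ω)).card : ℝ)) / (n + 1)
        = (k : ℝ) / (n + 1)} = A (Fin.last n) := by
    ext ω
    simp only [Set.mem_setOf_eq, hA]
    have hcc : 1 + (Finset.univ.filter
          fun i : Fin n => S i.castSucc ω ≤ S (Fin.last n) ω).card
        = (Finset.univ.filter fun i : Fin (n+1) => S i ω ≤ S (Fin.last n) ω).card := by
      rw [Finset.card_filter, Finset.card_filter, Fin.sum_univ_castSucc]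
      simp [add_comm]
    have hne : ((n : ℝ) + 1) ≠ 0 := by positivity
    rw [div_left_inj' hne]
    constructor
    · intro h
      rw [← hcc]
      exact_mod_cast h
    · intro h
      rw [← hcc] at h
      exact_mod_cast h
  rw [hset, hPlast]
end

section
/- (Theorem 1, conformalized early stopping for outlier detection.) Let n ≥ 1 and let Z_1, …, Z_{n+1} be exchangeable random elements of a measurable space 𝒵. Let T ≥ 1, let g : 𝒵^{n+1} → {1, …, T} be a measurable model-selection map that is invariant under every permutation of its n+1 arguments, and let s : {1, …, T} × 𝒵 → ℝ be a measurable score function. Define t̂ = g(Z_1, …, Z_{n+1}), the nonconformity scores Ŝ_i = s(t̂, Z_i) for i ∈ {1, …, n+1}, and the conformal p-value û_0 = (1 + #{i ∈ {1, …, n} : Ŝ_i ≤ Ŝ_{n+1}}) / (n+1). Then for every α ∈ (0,1), P(û_0 ≤ α) ≤ α. -/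
open MeasureTheory

lemma ces_rank_count_le {N : ℕ} (S : Fin N → ℝ) (m : ℕ) :
    (Finset.univ.filter (fun k => (Finset.univ.filter (fun i => S i ≤ S k)).card ≤ m)).card ≤ m := by
  classical
  set A := Finset.univ.filter (fun k => (Finset.univ.filter (fun i => S i ≤ S k)).card ≤ m) with hA
  rcases A.eq_empty_or_nonempty with h | h
  · simp [h]
  · obtain ⟨k, hkA, hk⟩ := A.exists_max_image S h
    have hsub : A ⊆ Finset.univ.filter (fun i => S i ≤ S k) := by
      intro a ha
      simp only [Finset.mem_filter, Finset.mem_univ, true_and]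
      exact hk a ha
    have hkm : (Finset.univ.filter (fun i => S i ≤ S k)).card ≤ m := by
      have := hkA
      rw [hA, Finset.mem_filter] at this
      exact this.2
    exact le_trans (Finset.card_le_card hsub) hkm

lemma ces_card_filter_perm {N : ℕ} (σ : Equiv.Perm (Fin N)) (p : Fin N → Prop) [DecidablePred p] :
    (Finset.univ.filter (fun i => p (σ i))).card = (Finset.univ.filter p).card := by
  apply Finset.card_bij (fun a _ => σ a)
  · intro a ha; simp only [Finset.mem_filter, Finset.mem_univ, true_and] at ha ⊢; exact ha
  · intro a _ b _ h; exact σ.injective h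
  · intro b hb
    refine ⟨σ.symm b, ?_, by simp⟩
    simp only [Finset.mem_filter, Finset.mem_univ, true_and] at hb ⊢
    simpa using hb

/-- **Theorem 1, CES for outlier detection.** The conformal p-value based on
a permutation-invariant, data-driven model selection map `g` applied to the augmented
data set (calibration points plus the test point) is super-uniform. -/
theorem ces_outlier_detection_valid
    {Ω 𝒵 : Type*} [MeasurableSpace Ω] [MeasurableSpace 𝒵]
    (P : Measure Ω) [IsProbabilityMeasure P] (n : ℕ) (hn : 1 ≤ n)
    (Z : Fin (n + 1) → Ω → 𝒵) (hZ : ∀ i, Measurable (Z i))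
    (hexch : ∀ σ : Equiv.Perm (Fin (n + 1)),
      P.map (fun ω => fun i => Z (σ i) ω) = P.map (fun ω => fun i => Z i ω))
    (T : ℕ) (hT : 1 ≤ T)
    (g : (Fin (n + 1) → 𝒵) → Fin T) (hg : Measurable g)
    (hginv : ∀ (σ : Equiv.Perm (Fin (n + 1))) (z : Fin (n + 1) → 𝒵),
      g (fun i => z (σ i)) = g z)
    (s : Fin T → 𝒵 → ℝ) (hs : Measurable (fun p : Fin T × 𝒵 => s p.1 p.2))
    (α : ℝ) (hα : α ∈ Set.Ioo (0 : ℝ) 1) :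
    P {ω | (1 + ((Finset.univ.filter (fun i : Fin n =>
          s (g (fun j => Z j ω)) (Z i.castSucc ω)
            ≤ s (g (fun j => Z j ω)) (Z (Fin.last n) ω))).card : ℝ)) / (n + 1) ≤ α}
      ≤ ENNReal.ofReal α := by
  classical
  obtain ⟨hα0, hα1⟩ := hα
  set m : ℕ := ⌊α * (n + 1)⌋₊ with hm
  set S : (Fin (n + 1) → 𝒵) → Fin (n + 1) → ℝ := fun z i => s (g z) (z i) with hSdef
  set r : (Fin (n + 1) → 𝒵) → Fin (n + 1) → ℕ :=
    fun z k => (Finset.univ.filter fun i => S z i ≤ S z k).card with hrdef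
  set Zf : Ω → Fin (n + 1) → 𝒵 := fun ω i => Z i ω with hZf
  have hZfm : Measurable Zf := measurable_pi_lambda _ (fun i => hZ i)
  have hSm : ∀ i, Measurable fun z => S z i := fun i =>
    hs.comp (hg.prodMk (measurable_pi_apply i))
  have hrm : ∀ k, Measurable fun z => r z k := by
    intro k
    have heq : (fun z => r z k)
        = fun z => ∑ i : Fin (n + 1), if S z i ≤ S z k then 1 else 0 :=
      funext fun z => Finset.card_filter _ _
    rw [heq]
    exact Finset.measurable_sum _ fun i _ =>
      Measurable.ite (measurableSet_le (hSm i) (hSm k)) measurable_const measurable_const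
  have hB : ∀ k, MeasurableSet {z : Fin (n + 1) → 𝒵 | r z k ≤ m} := by
    intro k
    have : {z : Fin (n + 1) → 𝒵 | r z k ≤ m} = (fun z => r z k) ⁻¹' {t | t ≤ m} := rfl
    rw [this]
    exact (hrm k) ((Set.to_countable _).measurableSet)
  have hrperm : ∀ (σ : Equiv.Perm (Fin (n + 1))) (z : Fin (n + 1) → 𝒵) (j),
      r (fun i => z (σ i)) j = r z (σ j) := by
    intro σ z j
    have hSp : ∀ i, S (fun i => z (σ i)) i = S z (σ i) := by
      intro i; simp only [hSdef, hginv σ z]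
    simp only [hrdef, hSp]
    exact ces_card_filter_perm σ (fun i => S z i ≤ S z (σ j))
  have hPk : ∀ k, P {ω | r (Zf ω) k ≤ m} = P {ω | r (Zf ω) (Fin.last n) ≤ m} := by
    intro k
    set σ := Equiv.swap (Fin.last n) k with hσ
    have h1 : Measurable fun ω => fun i => Z (σ i) ω :=
      measurable_pi_lambda _ fun i => hZ (σ i)
    have hmap := congrArg (fun μ : Measure (Fin (n + 1) → 𝒵) =>
      μ {z | r z (Fin.last n) ≤ m}) (hexch σ)
    rw [Measure.map_apply h1 (hB _), Measure.map_apply hZfm (hB _)] at hmap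
    have hpre : (fun ω => fun i => Z (σ i) ω) ⁻¹' {z | r z (Fin.last n) ≤ m}
        = {ω | r (Zf ω) k ≤ m} := by
      ext ω
      simp only [Set.mem_preimage, Set.mem_setOf_eq]
      have h2 : (fun i => Z (σ i) ω) = fun i => Zf ω (σ i) := rfl
      rw [h2, hrperm σ (Zf ω) (Fin.last n), Equiv.swap_apply_left]
    rw [hpre] at hmap
    exact hmap
  have hA : ∀ k, MeasurableSet {ω | r (Zf ω) k ≤ m} := fun k => hZfm (hB k)
  have hptw : ∀ ω, (Finset.univ.filter fun k => r (Zf ω) k ≤ m).card ≤ m := by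
    intro ω
    have := ces_rank_count_le (S (Zf ω)) m
    simpa [hrdef] using this
  have hsum : ∑ k : Fin (n + 1), P {ω | r (Zf ω) k ≤ m} ≤ (m : ENNReal) := by
    calc ∑ k : Fin (n + 1), P {ω | r (Zf ω) k ≤ m}
        = ∑ k : Fin (n + 1), ∫⁻ ω, {ω | r (Zf ω) k ≤ m}.indicator (fun _ => 1) ω ∂P := by
          refine Finset.sum_congr rfl fun k _ => ?_
          rw [lintegral_indicator_const (hA k), one_mul]
      _ = ∫⁻ ω, ∑ k : Fin (n + 1), {ω | r (Zf ω) k ≤ m}.indicator (fun _ => 1) ω ∂P := by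
          rw [lintegral_finset_sum]
          exact fun k _ => measurable_const.indicator (hA k)
      _ ≤ ∫⁻ _, (m : ENNReal) ∂P := by
          refine lintegral_mono fun ω => ?_
          have h3 : ∑ k : Fin (n + 1), {ω | r (Zf ω) k ≤ m}.indicator
              (fun _ => (1 : ENNReal)) ω
              = ((Finset.univ.filter fun k => r (Zf ω) k ≤ m).card : ENNReal) := by
            rw [Finset.card_filter]
            push_cast
            refine Finset.sum_congr rfl fun k _ => ?_
            simp [Set.indicator_apply]
          rw [h3]
          exact Nat.cast_le.mpr (hptw ω)
      _ = (m : ENNReal) := by simp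
  have hconst : ∑ k : Fin (n + 1), P {ω | r (Zf ω) k ≤ m}
      = ((n : ENNReal) + 1) * P {ω | r (Zf ω) (Fin.last n) ≤ m} := by
    rw [Finset.sum_congr rfl fun k _ => hPk k, Finset.sum_const, Finset.card_univ,
      Fintype.card_fin, nsmul_eq_mul]
    push_cast
    ring
  have hmle : (m : ENNReal) ≤ ENNReal.ofReal α * ((n : ENNReal) + 1) := by
    have h1 : (m : ℝ) ≤ α * (n + 1) := Nat.floor_le (by positivity)
    calc (m : ENNReal) = ENNReal.ofReal (m : ℝ) := (ENNReal.ofReal_natCast m).symm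
      _ ≤ ENNReal.ofReal (α * (n + 1)) := ENNReal.ofReal_le_ofReal h1
      _ = ENNReal.ofReal α * ENNReal.ofReal ((n : ℝ) + 1) := ENNReal.ofReal_mul hα0.le
      _ = ENNReal.ofReal α * ((n : ENNReal) + 1) := by
          congr 1
          rw [ENNReal.ofReal_add (by positivity) zero_le_one, ENNReal.ofReal_natCast,
            ENNReal.ofReal_one]
  have hfin : P {ω | r (Zf ω) (Fin.last n) ≤ m} ≤ ENNReal.ofReal α := by
    have hkey : ((n : ENNReal) + 1) * P {ω | r (Zf ω) (Fin.last n) ≤ m}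
        ≤ ENNReal.ofReal α * ((n : ENNReal) + 1) := by
      rw [← hconst]; exact hsum.trans hmle
    have hne : ((n : ENNReal) + 1) ≠ 0 := by simp
    have hnt : ((n : ENNReal) + 1) ≠ ⊤ := by simp
    rw [mul_comm (ENNReal.ofReal α), ENNReal.mul_le_mul_iff_right hne hnt] at hkey
    exact hkey
  have hset : {ω | (1 + ((Finset.univ.filter (fun i : Fin n =>
          s (g (fun j => Z j ω)) (Z i.castSucc ω)
            ≤ s (g (fun j => Z j ω)) (Z (Fin.last n) ω))).card : ℝ)) / (n + 1) ≤ α}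
      = {ω | r (Zf ω) (Fin.last n) ≤ m} := by
    ext ω
    simp only [Set.mem_setOf_eq]
    have hc : r (Zf ω) (Fin.last n)
        = 1 + (Finset.univ.filter (fun i : Fin n =>
            s (g (fun j => Z j ω)) (Z i.castSucc ω)
              ≤ s (g (fun j => Z j ω)) (Z (Fin.last n) ω))).card := by
      have h7 : r (Zf ω) (Fin.last n)
          = ∑ i : Fin (n + 1), if S (Zf ω) i ≤ S (Zf ω) (Fin.last n) then 1 else 0 :=
        Finset.card_filter _ _
      rw [h7, Fin.sum_univ_castSucc, if_pos le_rfl, add_comm, Finset.card_filter]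
    constructor
    · intro h
      rw [hc]
      rw [div_le_iff₀ (by positivity)] at h
      have h4 : ((1 + (Finset.univ.filter (fun i : Fin n =>
          s (g (fun j => Z j ω)) (Z i.castSucc ω)
            ≤ s (g (fun j => Z j ω)) (Z (Fin.last n) ω))).card : ℕ) : ℝ) ≤ α * ((n : ℝ) + 1) := by
        push_cast
        linarith
      exact Nat.le_floor h4
    · intro h
      rw [hc] at h
      rw [div_le_iff₀ (by positivity)]
      have h5 : ((1 + (Finset.univ.filter (fun i : Fin n =>
          s (g (fun j => Z j ω)) (Z i.castSucc ω)
            ≤ s (g (fun j => Z j ω)) (Z (Fin.last n) ω))).card : ℕ) : ℝ) ≤ (m : ℝ) :=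
        Nat.cast_le.mpr h
      have h6 : (m : ℝ) ≤ α * ((n : ℝ) + 1) := Nat.floor_le (by positivity)
      push_cast at h5
      linarith
  rw [hset]
  exact hfin
end

section
/- (Theorem 2, conformalized early stopping for multi-class classification, label-conditional coverage.) Let n ≥ 1, K ≥ 2 and let (X_1, Y_1), …, (X_{n+1}, Y_{n+1}) be exchangeable random pairs taking values in 𝒳 × {1, …, K}, where 𝒳 is a measurable space. Let T ≥ 1, let g : (𝒳 × {1, …, K})^{n+1} → {1, …, T} be measurable and invariant under every permutation of its n+1 arguments, and let s : {1, …, T} × 𝒳 × {1, …, K} → ℝ be measurable. For each y ∈ {1, …, K}, set t̂(y) = g((X_1, Y_1), …, (X_n, Y_n), (X_{n+1}, y)), Ŝ_i^y = s(t̂(y), X_i, y) for i ∈ {1, …, n+1} (with the convention that the test point uses features X_{n+1} and the imagined label y), and define the label-conditional conformal p-value û_y = (1 + #{i ∈ {1, …, n} : Y_i = y and Ŝ_i^y ≤ Ŝ_{n+1}^y}) / (1 + #{i ∈ {1, …, n} : Y_i = y}). Define the prediction set Ĉ_α(X_{n+1}) = {y ∈ {1, …, K} : û_y ≥ α}. Then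 for every α ∈ (0,1) and every y ∈ {1, …, K} with P(Y_{n+1} = y) > 0, P(Y_{n+1} ∈ Ĉ_α(X_{n+1}) | Y_{n+1} = y) ≥ 1 − α. -/
open MeasureTheory ProbabilityTheory
open scoped ENNReal

noncomputable section

def augData {Ω 𝒳 : Type*} {n K : ℕ} (X : Fin (n + 1) → Ω → 𝒳)
    (Y : Fin (n + 1) → Ω → Fin K) (y : Fin K) (ω : Ω) : Fin (n + 1) → 𝒳 × Fin K :=
  fun i => if i = Fin.last n then (X i ω, y) else (X i ω, Y i ω)

def pvalLC {Ω 𝒳 : Type*} {n K T : ℕ} (X : Fin (n + 1) → Ω → 𝒳)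
    (Y : Fin (n + 1) → Ω → Fin K) (g : (Fin (n + 1) → 𝒳 × Fin K) → Fin T)
    (s : Fin T → 𝒳 → Fin K → ℝ) (y : Fin K) (ω : Ω) : ℝ :=
  (1 + ((Finset.univ.filter (fun i : Fin n => Y i.castSucc ω = y ∧
      s (g (augData X Y y ω)) (X i.castSucc ω) y
        ≤ s (g (augData X Y y ω)) (X (Fin.last n) ω) y)).card : ℝ)) /
  (1 + ((Finset.univ.filter (fun i : Fin n => Y i.castSucc ω = y)).card : ℝ))

lemma card_filter_castSucc' {n : ℕ} (p : Fin (n+1) → Prop) [DecidablePred p] :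
    (Finset.univ.filter p).card
      = (Finset.univ.filter (fun i : Fin n => p i.castSucc)).card
        + (if p (Fin.last n) then 1 else 0) := by
  classical
  simp only [Finset.card_filter]
  rw [Fin.sum_univ_castSucc]

lemma card_filter_perm' {ι : Type*} [Fintype ι] [DecidableEq ι] (σ : Equiv.Perm ι)
    (p : ι → Prop) [DecidablePred p] :
    (Finset.univ.filter (fun i => p (σ i))).card = (Finset.univ.filter p).card := by
  rw [← Fintype.card_subtype, ← Fintype.card_subtype]
  exact Fintype.card_congr (σ.subtypeEquiv (fun i => Iff.rfl))

lemma count_small_rank' {ι : Type*} [Fintype ι] [DecidableEq ι] (L : Finset ι)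
    (S : ι → ℝ) (c : ℝ) (hc : 0 ≤ c) :
    ((L.filter (fun j => ((L.filter (fun i => S i ≤ S j)).card : ℝ) < c)).card : ℝ) ≤ c := by
  classical
  set B := L.filter (fun j => ((L.filter (fun i => S i ≤ S j)).card : ℝ) < c) with hB
  by_cases hne : B.Nonempty
  · obtain ⟨j0, hj0, hmax⟩ := Finset.exists_max_image B S hne
    have hj0lt : ((L.filter (fun i => S i ≤ S j0)).card : ℝ) < c :=
      (Finset.mem_filter.mp hj0).2
    have hsub : B ⊆ L.filter (fun i => S i ≤ S j0) := by
      intro i hi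
      exact Finset.mem_filter.mpr ⟨(Finset.mem_filter.mp hi).1, hmax i hi⟩
    calc ((B.card : ℝ)) ≤ ((L.filter (fun i => S i ≤ S j0)).card : ℝ) := by
            exact_mod_cast Finset.card_le_card hsub
      _ ≤ c := le_of_lt hj0lt
  · rw [Finset.not_nonempty_iff_eq_empty.mp hne]
    simpa using hc

/-- **Theorem 2, CES for multi-class classification.** The CES prediction
set `Ĉ_α(X_{n+1}) = {y : û_y ≥ α}` has label-conditional coverage at level `1 - α`. -/
theorem ces_classification_label_conditional_coverage
    {Ω 𝒳 : Type*} [MeasurableSpace Ω] [MeasurableSpace 𝒳]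
    (P : Measure Ω) [IsProbabilityMeasure P]
    (n K T : ℕ) (hn : 1 ≤ n) (hK : 2 ≤ K) (hT : 1 ≤ T)
    (X : Fin (n + 1) → Ω → 𝒳) (Y : Fin (n + 1) → Ω → Fin K)
    (hXY : ∀ i, Measurable (fun ω => (X i ω, Y i ω)))
    (hexch : ∀ σ : Equiv.Perm (Fin (n + 1)),
      P.map (fun ω => fun i => (X (σ i) ω, Y (σ i) ω)) =
        P.map (fun ω => fun i => (X i ω, Y i ω)))
    (g : (Fin (n + 1) → 𝒳 × Fin K) → Fin T) (hg : Measurable g)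
    (hginv : ∀ (σ : Equiv.Perm (Fin (n + 1))) (z : Fin (n + 1) → 𝒳 × Fin K),
      g (fun i => z (σ i)) = g z)
    (s : Fin T → 𝒳 → Fin K → ℝ)
    (hs : Measurable (fun p : Fin T × 𝒳 × Fin K => s p.1 p.2.1 p.2.2))
    (α : ℝ) (hα : α ∈ Set.Ioo (0 : ℝ) 1)
    (y : Fin K) (hy : 0 < P {ω | Y (Fin.last n) ω = y}) :
    ENNReal.ofReal (1 - α) ≤
      P[|{ω | Y (Fin.last n) ω = y}]
        {ω | α ≤ pvalLC X Y g s (Y (Fin.last n) ω) ω} := by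
  classical
  obtain ⟨hα0, hα1⟩ := hα
  set A : Set Ω := {ω | Y (Fin.last n) ω = y} with hAdef
  set Z : Ω → (Fin (n+1) → 𝒳 × Fin K) := fun ω i => (X i ω, Y i ω) with hZdef
  have hZ : Measurable Z := measurable_pi_lambda _ hXY
  set Sc : (Fin (n+1) → 𝒳 × Fin K) → Fin (n+1) → ℝ := fun z i => s (g z) (z i).1 y with hScdef
  have hScMeas : ∀ i, Measurable (fun z => Sc z i) := by
    intro i
    have heq : (fun z => Sc z i)
        = (fun p : Fin T × 𝒳 × Fin K => s p.1 p.2.1 p.2.2)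
          ∘ (fun z : Fin (n+1) → 𝒳 × Fin K => (g z, ((z i).1, y))) := rfl
    rw [heq]
    exact hs.comp (hg.prodMk (((measurable_pi_apply i).fst).prodMk measurable_const))
  set L : (Fin (n+1) → 𝒳 × Fin K) → Finset (Fin (n+1)) :=
    fun z => Finset.univ.filter (fun i => (z i).2 = y) with hLdef
  set N : (Fin (n+1) → 𝒳 × Fin K) → Fin (n+1) → ℕ :=
    fun z j => ((L z).filter (fun i => Sc z i ≤ Sc z j)).card with hNdef
  -- the bad event at the last coordinate
  set Sset : Set (Fin (n+1) → 𝒳 × Fin K) :=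
    {z | (z (Fin.last n)).2 = y ∧ ((N z (Fin.last n) : ℝ) < α * ((L z).card : ℝ))} with hSsetdef
  -- measurability of the label sets
  have hlab : ∀ i : Fin (n+1), MeasurableSet {z : Fin (n+1) → 𝒳 × Fin K | (z i).2 = y} := by
    intro i
    have : {z : Fin (n+1) → 𝒳 × Fin K | (z i).2 = y}
        = (fun z : Fin (n+1) → 𝒳 × Fin K => (z i).2) ⁻¹' {y} := rfl
    rw [this]
    exact (measurable_pi_apply i).snd (measurableSet_singleton y)
  -- N and L card as measurable real functions
  have hNreal : ∀ j, Measurable (fun z => ((N z j : ℝ))) := by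
    intro j
    have heq : (fun z => ((N z j : ℝ)))
        = fun z => ∑ i : Fin (n+1),
            if ((z i).2 = y ∧ Sc z i ≤ Sc z j) then (1:ℝ) else 0 := by
      funext z
      simp only [hNdef, hLdef, Finset.filter_filter, Finset.card_filter]
      push_cast
      rfl
    rw [heq]
    refine Finset.measurable_sum _ (fun i _ => Measurable.ite ?_ measurable_const measurable_const)
    exact (hlab i).inter (measurableSet_le (hScMeas i) (hScMeas j))
  have hLreal : Measurable (fun z => (((L z).card : ℝ))) := by
    have heq : (fun z => (((L z).card : ℝ)))
        = fun z => ∑ i : Fin (n+1), if ((z i).2 = y) then (1:ℝ) else 0 := by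
      funext z
      simp only [hLdef, Finset.card_filter]
      push_cast
      rfl
    rw [heq]
    exact Finset.measurable_sum _ (fun i _ => Measurable.ite (hlab i) measurable_const measurable_const)
  have hSsetMeas : MeasurableSet Sset := by
    refine (hlab (Fin.last n)).inter ?_
    exact measurableSet_lt (hNreal (Fin.last n)) (measurable_const.mul hLreal)
  -- the per-index bad event predicate
  set F : (Fin (n+1) → 𝒳 × Fin K) → Fin (n+1) → Prop :=
    fun z j => (z j).2 = y ∧ ((N z j : ℝ) < α * ((L z).card : ℝ)) with hFdef
  have hFmeas : ∀ j, MeasurableSet {z | F z j} := fun j =>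
    (hlab j).inter (measurableSet_lt (hNreal j) (measurable_const.mul hLreal))
  -- swapping j with the last coordinate turns membership in Sset into F · j
  have hswap : ∀ (j : Fin (n+1)) (z : Fin (n+1) → 𝒳 × Fin K),
      (fun i => z (Equiv.swap j (Fin.last n) i)) ∈ Sset ↔ F z j := by
    intro j z
    set σ := Equiv.swap j (Fin.last n) with hσ
    set w : Fin (n+1) → 𝒳 × Fin K := fun i => z (σ i) with hw
    have hglast : g w = g z := hginv σ z
    have hScw : ∀ i, Sc w i = Sc z (σ i) := by
      intro i; show s (g w) (w i).1 y = s (g z) (z (σ i)).1 y; rw [hglast]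
    have hσlast : σ (Fin.last n) = j := Equiv.swap_apply_right _ _
    have hLw : (L w).card = (L z).card := by
      simp only [hLdef, hw]
      exact card_filter_perm' σ (fun i => (z i).2 = y)
    have hNw : N w (Fin.last n) = N z j := by
      simp only [hNdef, hLdef, Finset.filter_filter]
      have h1 : Finset.univ.filter (fun i => (w i).2 = y ∧ Sc w i ≤ Sc w (Fin.last n))
          = Finset.univ.filter
              (fun i => ((z (σ i)).2 = y ∧ Sc z (σ i) ≤ Sc z j)) := by
        apply Finset.filter_congr
        intro i _
        rw [hScw i, hScw (Fin.last n), hσlast, hw]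
      rw [h1]
      exact card_filter_perm' σ (fun i => (z i).2 = y ∧ Sc z i ≤ Sc z j)
    show (w (Fin.last n)).2 = y ∧ ((N w (Fin.last n) : ℝ) < α * ((L w).card : ℝ)) ↔ F z j
    rw [hNw, hLw, hFdef]
    have : (w (Fin.last n)).2 = (z j).2 := by
      show (z (σ (Fin.last n))).2 = (z j).2
      rw [hσlast]
    rw [this]
  -- per-index events have the same probability as the bad event
  have hEj : ∀ j : Fin (n+1), P (Z ⁻¹' {z | F z j}) = P (Z ⁻¹' Sset) := by
    intro j
    set σ := Equiv.swap j (Fin.last n) with hσ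
    have hm1 : Measurable (fun ω => fun i => (X (σ i) ω, Y (σ i) ω)) :=
      measurable_pi_lambda _ (fun i => hXY (σ i))
    have hm2 : Measurable (fun ω => fun i => (X i ω, Y i ω)) :=
      measurable_pi_lambda _ hXY
    have h := congrArg (fun μ : Measure (Fin (n+1) → 𝒳 × Fin K) => μ Sset) (hexch σ)
    rw [Measure.map_apply hm1 hSsetMeas, Measure.map_apply hm2 hSsetMeas] at h
    have hpre : (fun ω => fun i => (X (σ i) ω, Y (σ i) ω)) ⁻¹' Sset
        = Z ⁻¹' {z | F z j} := by
      ext ω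
      simp only [Set.mem_preimage, Set.mem_setOf_eq, hZdef]
      exact hswap j (fun i => (X i ω, Y i ω))
    rw [hpre, ← hZdef] at h
    exact h
  -- label marginals are exchangeable
  have hBj : ∀ j : Fin (n+1), P {ω | Y j ω = y} = P A := by
    intro j
    set σ := Equiv.swap j (Fin.last n) with hσ
    have hm1 : Measurable (fun ω => fun i => (X (σ i) ω, Y (σ i) ω)) :=
      measurable_pi_lambda _ (fun i => hXY (σ i))
    have hm2 : Measurable (fun ω => fun i => (X i ω, Y i ω)) :=
      measurable_pi_lambda _ hXY
    have h := congrArg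
      (fun μ : Measure (Fin (n+1) → 𝒳 × Fin K) => μ {z | (z (Fin.last n)).2 = y}) (hexch σ)
    rw [Measure.map_apply hm1 (hlab (Fin.last n)),
        Measure.map_apply hm2 (hlab (Fin.last n))] at h
    have hσlast : σ (Fin.last n) = j := Equiv.swap_apply_right _ _
    have h1 : (fun ω => fun i => (X (σ i) ω, Y (σ i) ω)) ⁻¹' {z | (z (Fin.last n)).2 = y}
        = {ω | Y j ω = y} := by
      ext ω
      simp only [Set.mem_preimage, Set.mem_setOf_eq, hσlast]
    have h2 : (fun ω => fun i => (X i ω, Y i ω)) ⁻¹' {z | (z (Fin.last n)).2 = y} = A := by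
      ext ω
      simp only [Set.mem_preimage, Set.mem_setOf_eq, hAdef]
    rw [h1, h2] at h
    exact h
  -- deterministic counting bound
  have hcount : ∀ z : Fin (n+1) → 𝒳 × Fin K,
      ((Finset.univ.filter (fun j => F z j)).card : ℝ) ≤ α * ((L z).card : ℝ) := by
    intro z
    have h1 : Finset.univ.filter (fun j => F z j)
        = (L z).filter (fun j => ((N z j : ℝ)) < α * ((L z).card : ℝ)) := by
      simp only [hFdef, hLdef, Finset.filter_filter]
    rw [h1]
    have h2 := count_small_rank' (L z) (Sc z) (α * ((L z).card : ℝ))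
      (mul_nonneg hα0.le (Nat.cast_nonneg _))
    simpa only [hNdef] using h2
  -- pointwise indicator bound
  have hptwise : ∀ ω : Ω,
      (∑ j : Fin (n+1), (Z ⁻¹' {z | F z j}).indicator (fun _ => (1:ℝ≥0∞)) ω)
        ≤ ENNReal.ofReal α *
          ∑ j : Fin (n+1), ({ω' | Y j ω' = y} : Set Ω).indicator (fun _ => (1:ℝ≥0∞)) ω := by
    intro ω
    have h1 : (∑ j : Fin (n+1), (Z ⁻¹' {z | F z j}).indicator (fun _ => (1:ℝ≥0∞)) ω)
        = ((Finset.univ.filter (fun j => F (Z ω) j)).card : ℝ≥0∞) := by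
      rw [Finset.card_filter]
      push_cast
      refine Finset.sum_congr rfl (fun j _ => ?_)
      simp [Set.indicator_apply, Set.mem_preimage, Set.mem_setOf_eq]
    have h2 : (∑ j : Fin (n+1), ({ω' | Y j ω' = y} : Set Ω).indicator (fun _ => (1:ℝ≥0∞)) ω)
        = (((L (Z ω)).card : ℝ≥0∞)) := by
      simp only [hLdef, Finset.card_filter]
      push_cast
      refine Finset.sum_congr rfl (fun j _ => ?_)
      simp [Set.indicator_apply, Set.mem_setOf_eq, hZdef]
    rw [h1, h2]
    calc ((Finset.univ.filter (fun j => F (Z ω) j)).card : ℝ≥0∞)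
        = ENNReal.ofReal (((Finset.univ.filter (fun j => F (Z ω) j)).card : ℝ)) := by
          rw [ENNReal.ofReal_natCast]
      _ ≤ ENNReal.ofReal (α * ((L (Z ω)).card : ℝ)) :=
          ENNReal.ofReal_le_ofReal (hcount (Z ω))
      _ = ENNReal.ofReal α * ENNReal.ofReal (((L (Z ω)).card : ℝ)) :=
          ENNReal.ofReal_mul hα0.le
      _ = ENNReal.ofReal α * (((L (Z ω)).card : ℝ≥0∞)) := by rw [ENNReal.ofReal_natCast]
  have hBjm : ∀ j : Fin (n+1), MeasurableSet {ω | Y j ω = y} := by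
    intro j
    have hYj : Measurable (Y j) := (hXY j).snd
    exact hYj (measurableSet_singleton y)
  have hAj : ∀ j, MeasurableSet (Z ⁻¹' {z | F z j}) := fun j => hZ (hFmeas j)
  have hsum : ((n:ℝ≥0∞)+1) * P (Z ⁻¹' Sset)
      ≤ ENNReal.ofReal α * (((n:ℝ≥0∞)+1) * P A) := by
    calc ((n:ℝ≥0∞)+1) * P (Z ⁻¹' Sset)
        = ∑ _j : Fin (n+1), P (Z ⁻¹' Sset) := by
          simp only [Finset.sum_const, Finset.card_univ, Fintype.card_fin, nsmul_eq_mul]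
          push_cast
          ring
      _ = ∑ j : Fin (n+1), P (Z ⁻¹' {z | F z j}) :=
          Finset.sum_congr rfl (fun j _ => (hEj j).symm)
      _ = ∑ j : Fin (n+1), ∫⁻ ω, (Z ⁻¹' {z | F z j}).indicator (fun _ => (1:ℝ≥0∞)) ω ∂P :=
          Finset.sum_congr rfl (fun j _ => (lintegral_indicator_one (hAj j)).symm)
      _ = ∫⁻ ω, ∑ j : Fin (n+1), (Z ⁻¹' {z | F z j}).indicator (fun _ => (1:ℝ≥0∞)) ω ∂P :=
          (lintegral_finset_sum _ (fun j _ => measurable_const.indicator (hAj j))).symm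
      _ ≤ ∫⁻ ω, ENNReal.ofReal α *
            ∑ j : Fin (n+1), ({ω' | Y j ω' = y} : Set Ω).indicator (fun _ => (1:ℝ≥0∞)) ω ∂P :=
          lintegral_mono hptwise
      _ = ENNReal.ofReal α * ∫⁻ ω,
            ∑ j : Fin (n+1), ({ω' | Y j ω' = y} : Set Ω).indicator (fun _ => (1:ℝ≥0∞)) ω ∂P :=
          lintegral_const_mul _
            (Finset.measurable_sum _ (fun j _ => measurable_const.indicator (hBjm j)))
      _ = ENNReal.ofReal α * ∑ j : Fin (n+1), P {ω | Y j ω = y} := by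
          rw [lintegral_finset_sum _ (fun j _ => measurable_const.indicator (hBjm j))]
          congr 1
          exact Finset.sum_congr rfl (fun j _ => lintegral_indicator_one (hBjm j))
      _ = ENNReal.ofReal α * (((n:ℝ≥0∞)+1) * P A) := by
          simp only [hBj, Finset.sum_const, Finset.card_univ, Fintype.card_fin, nsmul_eq_mul]
          push_cast
          ring
  have hPE : P (Z ⁻¹' Sset) ≤ ENNReal.ofReal α * P A := by
    have hc0 : ((n:ℝ≥0∞)+1) ≠ 0 := by
      simp
    have hct : ((n:ℝ≥0∞)+1) ≠ ⊤ := by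
      simp [ENNReal.add_eq_top]
    rw [show ENNReal.ofReal α * (((n:ℝ≥0∞)+1) * P A)
        = ((n:ℝ≥0∞)+1) * (ENNReal.ofReal α * P A) by ring] at hsum
    exact (ENNReal.mul_le_mul_iff_right hc0 hct).mp hsum
  -- identify the p-value with N / L.card on the conditioning event
  have hiff : ∀ ω : Ω, Y (Fin.last n) ω = y →
      (pvalLC X Y g s y ω < α ↔
        ((N (Z ω) (Fin.last n) : ℝ) < α * (((L (Z ω)).card : ℝ)))) := by
    intro ω hYl
    have haug : augData X Y y ω = Z ω := by
      rw [hZdef]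
      funext i
      by_cases h : i = Fin.last n
      · subst h
        simp [augData, hYl]
      · simp [augData, h]
    have hplast : ((Z ω) (Fin.last n)).2 = y ∧ Sc (Z ω) (Fin.last n) ≤ Sc (Z ω) (Fin.last n) := by
      refine ⟨?_, le_refl _⟩
      rw [hZdef]
      exact hYl
    have hNeq : N (Z ω) (Fin.last n) = (Finset.univ.filter (fun i : Fin n =>
        Y i.castSucc ω = y ∧ s (g (augData X Y y ω)) (X i.castSucc ω) y
          ≤ s (g (augData X Y y ω)) (X (Fin.last n) ω) y)).card + 1 := by
      simp only [hNdef, hLdef, Finset.filter_filter]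
      rw [card_filter_castSucc'
        (fun jj => ((Z ω) jj).2 = y ∧ Sc (Z ω) jj ≤ Sc (Z ω) (Fin.last n))]
      rw [if_pos hplast]
      congr 1
      refine congrArg Finset.card (Finset.filter_congr fun i _ => ?_)
      simp [hScdef, haug, hZdef]
    have hLeq : (L (Z ω)).card
        = (Finset.univ.filter (fun i : Fin n => Y i.castSucc ω = y)).card + 1 := by
      simp only [hLdef]
      rw [card_filter_castSucc' (fun jj => ((Z ω) jj).2 = y)]
      rw [if_pos hplast.1]
    have hLpos : (0:ℝ) < (((L (Z ω)).card : ℝ)) := by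
      rw [hLeq]
      positivity
    have hpv : pvalLC X Y g s y ω
        = ((N (Z ω) (Fin.last n) : ℝ)) / (((L (Z ω)).card : ℝ)) := by
      rw [pvalLC, hNeq, hLeq]
      push_cast
      ring_nf
    rw [hpv, div_lt_iff₀ hLpos]
  -- the bad event in ω-space
  have hEP : Z ⁻¹' Sset = A ∩ {ω | pvalLC X Y g s y ω < α} := by
    ext ω
    simp only [Set.mem_preimage, hSsetdef, Set.mem_setOf_eq, Set.mem_inter_iff, hAdef]
    constructor
    · rintro ⟨h1, h2⟩
      exact ⟨h1, (hiff ω h1).mpr h2⟩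
    · rintro ⟨h1, h2⟩
      exact ⟨h1, (hiff ω h1).mp h2⟩
  have hAm : MeasurableSet A := by
    rw [hAdef]
    exact hBjm (Fin.last n)
  have hsub : Z ⁻¹' Sset ⊆ A := by
    rw [hEP]
    exact Set.inter_subset_left
  have hGE : A ∩ {ω | α ≤ pvalLC X Y g s (Y (Fin.last n) ω) ω} = A \ (Z ⁻¹' Sset) := by
    rw [hEP]
    ext ω
    simp only [Set.mem_inter_iff, Set.mem_diff, Set.mem_setOf_eq, hAdef]
    constructor
    · rintro ⟨h1, h2⟩
      rw [h1] at h2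
      exact ⟨h1, fun h3 => absurd h3.2 (not_lt.mpr h2)⟩
    · rintro ⟨h1, h2⟩
      refine ⟨h1, ?_⟩
      rw [h1]
      exact not_lt.mp (fun hlt => h2 ⟨h1, hlt⟩)
  have hPdiff : P (A \ (Z ⁻¹' Sset)) = P A - P (Z ⁻¹' Sset) :=
    measure_diff hsub (hZ hSsetMeas).nullMeasurableSet (measure_ne_top P _)
  calc ENNReal.ofReal (1 - α)
      = 1 - ENNReal.ofReal α := by
        rw [ENNReal.ofReal_sub _ hα0.le, ENNReal.ofReal_one]
    _ = (1 - ENNReal.ofReal α) * ((P A)⁻¹ * P A) := by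
        rw [ENNReal.inv_mul_cancel hy.ne' (measure_ne_top P A), mul_one]
    _ = (P A)⁻¹ * ((1 - ENNReal.ofReal α) * P A) := by
        rw [mul_left_comm]
    _ ≤ (P A)⁻¹ * (P A - P (Z ⁻¹' Sset)) := by
        refine mul_le_mul_right ?_ _
        have h1 : (1 - ENNReal.ofReal α) * P A = P A - ENNReal.ofReal α * P A := by
          rw [ENNReal.sub_mul (fun _ _ => measure_ne_top P A), one_mul]
        rw [h1]
        exact tsub_le_tsub_left hPE _
    _ = (P A)⁻¹ * P (A \ (Z ⁻¹' Sset)) := by rw [hPdiff]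
    _ = (P A)⁻¹ * P (A ∩ {ω | α ≤ pvalLC X Y g s (Y (Fin.last n) ω) ω}) := by rw [hGE]
    _ = P[{ω | α ≤ pvalLC X Y g s (Y (Fin.last n) ω) ω}|A] :=
        (cond_apply hAm P _).symm

end
end

section
/- (Theorem A1, conformalized early stopping for multi-class classification, marginal coverage.) Let n ≥ 1, K ≥ 2 and let (X_1, Y_1), …, (X_{n+1}, Y_{n+1}) be exchangeable random pairs taking values in 𝒳 × {1, …, K}, where 𝒳 is a measurable space. Let T ≥ 1, let g : (𝒳 × {1, …, K})^{n+1} → {1, …, T} be measurable and invariant under every permutation of its n+1 arguments, and let s : {1, …, T} × 𝒳 × {1, …, K} → ℝ be measurable. For each y ∈ {1, …, K}, set t̂(y) = g((X_1, Y_1), …, (X_n, Y_n), (X_{n+1}, y)), Ŝ_i^y = s(t̂(y), X_i, Y_i) for i ∈ {1, …, n} and Ŝ_{n+1}^y = s(t̂(y), X_{n+1}, y), and define the marginal conformal p-value û_y = (1 + #{i ∈ {1, …, n} : Ŝ_i^y ≤ Ŝ_{n+1}^y}) / (n+1). Define the prediction set Ĉ_α(X_{n+1}) = {y ∈ {1,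 …, K} : û_y ≥ α}. Then for every α ∈ (0,1), P(Y_{n+1} ∈ Ĉ_α(X_{n+1})) ≥ 1 − α. -/
open MeasureTheory ProbabilityTheory

noncomputable section

/-- Marginal conformal p-value of CES for multi-class classification:
the model `t̂(y) = g` of the augmented data scores the calibration points with their
true labels and the test point with the imagined label `y`; all `n` calibration
points are used for the comparison. -/
def pvalMarg {Ω 𝒳 : Type*} {n K T : ℕ} (X : Fin (n + 1) → Ω → 𝒳)
    (Y : Fin (n + 1) → Ω → Fin K) (g : (Fin (n + 1) → 𝒳 × Fin K) → Fin T)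
    (s : Fin T → 𝒳 → Fin K → ℝ) (y : Fin K) (ω : Ω) : ℝ :=
  (1 + ((Finset.univ.filter (fun i : Fin n =>
      s (g (augData X Y y ω)) (X i.castSucc ω) (Y i.castSucc ω)
        ≤ s (g (augData X Y y ω)) (X (Fin.last n) ω) y)).card : ℝ)) / (n + 1)

def rnk {𝒳 : Type*} {n K T : ℕ} (g : (Fin (n + 1) → 𝒳 × Fin K) → Fin T)
    (s : Fin T → 𝒳 → Fin K → ℝ) (z : Fin (n + 1) → 𝒳 × Fin K) (k : Fin (n + 1)) : ℕ :=
  (Finset.univ.filter (fun i => s (g z) (z i).1 (z i).2 ≤ s (g z) (z k).1 (z k).2)).card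

lemma rnk_perm {𝒳 : Type*} {n K T : ℕ} (g : (Fin (n + 1) → 𝒳 × Fin K) → Fin T)
    (s : Fin T → 𝒳 → Fin K → ℝ)
    (hginv : ∀ (σ : Equiv.Perm (Fin (n + 1))) (z : Fin (n + 1) → 𝒳 × Fin K),
      g (fun i => z (σ i)) = g z)
    (σ : Equiv.Perm (Fin (n + 1))) (z : Fin (n + 1) → 𝒳 × Fin K) (j : Fin (n + 1)) :
    rnk g s (fun i => z (σ i)) j = rnk g s z (σ j) := by
  unfold rnk
  rw [hginv σ z]
  have : (Finset.univ.filter (fun i => s (g z) (z (σ i)).1 (z (σ i)).2 ≤ s (g z) (z (σ j)).1 (z (σ j)).2))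
      = (Finset.univ.filter (fun i => s (g z) (z i).1 (z i).2 ≤ s (g z) (z (σ j)).1 (z (σ j)).2)).map
          σ.symm.toEmbedding := by
    ext i
    simp [Equiv.symm_apply_eq, eq_comm]
  rw [this, Finset.card_map]

lemma rnk_count_lt {𝒳 : Type*} {n K T : ℕ} (g : (Fin (n + 1) → 𝒳 × Fin K) → Fin T)
    (s : Fin T → 𝒳 → Fin K → ℝ) (c : ℝ) (hc : 0 ≤ c) (z : Fin (n + 1) → 𝒳 × Fin K) :
    ((Finset.univ.filter (fun k => (rnk g s z k : ℝ) < c)).card : ℝ) ≤ c := by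
  set M := Finset.univ.filter (fun k : Fin (n + 1) => (rnk g s z k : ℝ) < c) with hM
  rcases M.eq_empty_or_nonempty with h | h
  · simp [h, hc]
  · obtain ⟨k, hkM, hkmax⟩ := M.exists_max_image (fun i => s (g z) (z i).1 (z i).2) h
    have hsub : M ⊆ Finset.univ.filter
        (fun i => s (g z) (z i).1 (z i).2 ≤ s (g z) (z k).1 (z k).2) := by
      intro j hj
      simp only [Finset.mem_filter, Finset.mem_univ, true_and]
      exact hkmax j hj
    have h1 : M.card ≤ rnk g s z k := Finset.card_le_card hsub
    have h2 : (rnk g s z k : ℝ) < c := (Finset.mem_filter.mp hkM).2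
    calc (M.card : ℝ) ≤ (rnk g s z k : ℝ) := Nat.cast_le.mpr h1
      _ ≤ c := le_of_lt h2

lemma rnk_measurable {𝒳 : Type*} [MeasurableSpace 𝒳] {n K T : ℕ}
    (g : (Fin (n + 1) → 𝒳 × Fin K) → Fin T) (hg : Measurable g)
    (s : Fin T → 𝒳 → Fin K → ℝ)
    (hs : Measurable (fun p : Fin T × 𝒳 × Fin K => s p.1 p.2.1 p.2.2))
    (k : Fin (n + 1)) : Measurable (fun z => rnk g s z k) := by
  have hS : ∀ i : Fin (n + 1), Measurable (fun z : Fin (n + 1) → 𝒳 × Fin K =>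
      s (g z) (z i).1 (z i).2) := fun i =>
    hs.comp (hg.prodMk (measurable_pi_apply i))
  have : ∀ i, Measurable (fun z : Fin (n + 1) → 𝒳 × Fin K =>
      if s (g z) (z i).1 (z i).2 ≤ s (g z) (z k).1 (z k).2 then (1 : ℕ) else 0) := by
    intro i
    exact Measurable.ite (measurableSet_le (hS i) (hS k)) measurable_const measurable_const
  have heq : (fun z => rnk g s z k) = fun z => ∑ i : Fin (n + 1),
      if s (g z) (z i).1 (z i).2 ≤ s (g z) (z k).1 (z k).2 then (1 : ℕ) else 0 := by
    funext z
    simp only [rnk, Finset.card_filter]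
  rw [heq]
  exact Finset.measurable_sum _ fun i _ => this i

/-- **Theorem A1, CES for multi-class classification, marginal coverage.**
The CES prediction set `Ĉ_α(X_{n+1}) = {y : û_y ≥ α}` has marginal coverage `1 - α`. -/
theorem ces_classification_marginal_coverage
    {Ω 𝒳 : Type*} [MeasurableSpace Ω] [MeasurableSpace 𝒳]
    (P : Measure Ω) [IsProbabilityMeasure P]
    (n K T : ℕ) (hn : 1 ≤ n) (hK : 2 ≤ K) (hT : 1 ≤ T)
    (X : Fin (n + 1) → Ω → 𝒳) (Y : Fin (n + 1) → Ω → Fin K)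
    (hXY : ∀ i, Measurable (fun ω => (X i ω, Y i ω)))
    (hexch : ∀ σ : Equiv.Perm (Fin (n + 1)),
      P.map (fun ω => fun i => (X (σ i) ω, Y (σ i) ω)) =
        P.map (fun ω => fun i => (X i ω, Y i ω)))
    (g : (Fin (n + 1) → 𝒳 × Fin K) → Fin T) (hg : Measurable g)
    (hginv : ∀ (σ : Equiv.Perm (Fin (n + 1))) (z : Fin (n + 1) → 𝒳 × Fin K),
      g (fun i => z (σ i)) = g z)
    (s : Fin T → 𝒳 → Fin K → ℝ)
    (hs : Measurable (fun p : Fin T × 𝒳 × Fin K => s p.1 p.2.1 p.2.2))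
    (α : ℝ) (hα : α ∈ Set.Ioo (0 : ℝ) 1) :
    ENNReal.ofReal (1 - α) ≤
      P {ω | α ≤ pvalMarg X Y g s (Y (Fin.last n) ω) ω} := by
  obtain ⟨hα0, hα1⟩ := hα
  set c : ℝ := α * (n + 1) with hc
  have hc0 : 0 ≤ c := by positivity
  set Z : Ω → (Fin (n + 1) → 𝒳 × Fin K) := fun ω i => (X i ω, Y i ω) with hZdef
  have hZ : Measurable Z := measurable_pi_lambda _ fun i => hXY i
  set E : Fin (n + 1) → Set (Fin (n + 1) → 𝒳 × Fin K) :=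
    fun k => {z | (rnk g s z k : ℝ) < c} with hE
  have hEmeas : ∀ k, MeasurableSet (E k) := by
    intro k
    have h1 : E k = (fun z => rnk g s z k) ⁻¹' {m : ℕ | (m : ℝ) < c} := rfl
    rw [h1]
    exact rnk_measurable g hg s hs k (by trivial)
  -- all events have the same probability by exchangeability
  have key : ∀ k, P (Z ⁻¹' E k) = P (Z ⁻¹' E (Fin.last n)) := by
    intro k
    set σ := Equiv.swap k (Fin.last n) with hσ
    have hσlast : σ (Fin.last n) = k := Equiv.swap_apply_right k (Fin.last n)
    have h1 : Z ⁻¹' E k = (fun ω => fun i => Z ω (σ i)) ⁻¹' E (Fin.last n) := by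
      ext ω
      simp only [Set.mem_preimage, hE, Set.mem_setOf_eq]
      rw [rnk_perm g s hginv σ (Z ω) (Fin.last n), hσlast]
    have hZσ : Measurable fun ω => fun i : Fin (n + 1) => Z ω (σ i) :=
      measurable_pi_lambda _ fun i => hXY (σ i)
    have hmap : P.map (fun ω => fun i : Fin (n + 1) => Z ω (σ i)) = P.map Z := hexch σ
    rw [h1, ← Measure.map_apply hZσ (hEmeas _), hmap, Measure.map_apply hZ (hEmeas _)]
  -- sum of indicators bound
  have hind : ∀ k, Measurable fun ω => (E k).indicator (fun _ => (1 : ENNReal)) (Z ω) :=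
    fun k => (measurable_const.indicator (hEmeas k)).comp hZ
  have hPi : ∀ k, P (Z ⁻¹' E k) = ∫⁻ ω, (E k).indicator (fun _ => (1 : ENNReal)) (Z ω) ∂P := by
    intro k
    rw [← lintegral_indicator_one (hZ (hEmeas k))]
    refine lintegral_congr fun ω => ?_
    by_cases h : Z ω ∈ E k <;> simp [Set.indicator_apply, Set.mem_preimage, h]
  have hsum_le : ∑ k : Fin (n + 1), P (Z ⁻¹' E k) ≤ ENNReal.ofReal c := by
    calc ∑ k : Fin (n + 1), P (Z ⁻¹' E k)
        = ∑ k : Fin (n + 1), ∫⁻ ω, (E k).indicator (fun _ => (1 : ENNReal)) (Z ω) ∂P := by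
          exact Finset.sum_congr rfl fun k _ => hPi k
      _ = ∫⁻ ω, ∑ k : Fin (n + 1), (E k).indicator (fun _ => (1 : ENNReal)) (Z ω) ∂P := by
          rw [lintegral_finset_sum _ (fun k _ => hind k)]
      _ ≤ ∫⁻ _, ENNReal.ofReal c ∂P := by
          apply lintegral_mono
          intro ω
          dsimp only
          have heq : ∑ k : Fin (n + 1), (E k).indicator (fun _ => (1 : ENNReal)) (Z ω)
              = ((Finset.univ.filter (fun k : Fin (n + 1) =>
                  (rnk g s (Z ω) k : ℝ) < c)).card : ENNReal) := by
            rw [Finset.card_filter]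
            push_cast
            refine Finset.sum_congr rfl fun k _ => ?_
            simp [Set.indicator_apply, hE]
          rw [heq]
          have hb := rnk_count_lt g s c hc0 (Z ω)
          calc ((Finset.univ.filter (fun k : Fin (n + 1) =>
                  (rnk g s (Z ω) k : ℝ) < c)).card : ENNReal)
              = ENNReal.ofReal ((Finset.univ.filter (fun k : Fin (n + 1) =>
                  (rnk g s (Z ω) k : ℝ) < c)).card : ℝ) := by
                rw [ENNReal.ofReal_natCast]
            _ ≤ ENNReal.ofReal c := ENNReal.ofReal_le_ofReal hb
      _ = ENNReal.ofReal c := by simp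
  have hsum_eq : ∑ k : Fin (n + 1), P (Z ⁻¹' E k)
      = ((n : ENNReal) + 1) * P (Z ⁻¹' E (Fin.last n)) := by
    rw [Finset.sum_congr rfl fun k _ => key k, Finset.sum_const, Finset.card_univ,
      Fintype.card_fin, nsmul_eq_mul]
    push_cast
    ring
  have hofc : ENNReal.ofReal c = ENNReal.ofReal α * ((n : ENNReal) + 1) := by
    rw [hc, ENNReal.ofReal_mul hα0.le]
    congr 1
    rw [ENNReal.ofReal_add (Nat.cast_nonneg n) zero_le_one, ENNReal.ofReal_natCast,
      ENNReal.ofReal_one]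
  have hfinal : P (Z ⁻¹' E (Fin.last n)) ≤ ENNReal.ofReal α := by
    have h := hsum_le
    rw [hsum_eq, hofc, mul_comm (ENNReal.ofReal α) _] at h
    have hne0 : ((n : ENNReal) + 1) ≠ 0 := by simp
    have hnetop : ((n : ENNReal) + 1) ≠ ⊤ := by simp
    exact (ENNReal.mul_le_mul_iff_right hne0 hnetop).mp h
  -- identify the event
  have hset : {ω | α ≤ pvalMarg X Y g s (Y (Fin.last n) ω) ω} = (Z ⁻¹' E (Fin.last n))ᶜ := by
    ext ω
    simp only [Set.mem_setOf_eq, Set.mem_compl_iff, Set.mem_preimage, hE, not_lt]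
    have haug : augData X Y (Y (Fin.last n) ω) ω = Z ω := by
      funext i
      simp only [augData, hZdef]
      split_ifs with h
      · subst h; rfl
      · rfl
    have hrnk : rnk g s (Z ω) (Fin.last n)
        = (Finset.univ.filter (fun i : Fin n =>
            s (g (Z ω)) (X i.castSucc ω) (Y i.castSucc ω)
              ≤ s (g (Z ω)) (X (Fin.last n) ω) (Y (Fin.last n) ω))).card + 1 := by
      simp only [rnk, Finset.card_filter]
      rw [Fin.sum_univ_castSucc]
      simp [hZdef]
    rw [pvalMarg, haug]
    rw [le_div_iff₀ (by positivity : (0 : ℝ) < (n : ℝ) + 1)]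
    rw [hrnk]
    constructor
    · intro h
      push_cast
      linarith
    · intro h
      push_cast at h
      linarith
  rw [hset, measure_compl (hZ (hEmeas _)) (measure_ne_top _ _), measure_univ]
  have h1 : ENNReal.ofReal (1 - α) = 1 - ENNReal.ofReal α := by
    rw [ENNReal.ofReal_sub _ hα0.le, ENNReal.ofReal_one]
  rw [h1]
  exact tsub_le_tsub_left hfinal 1

end
end

section
/- (Oracle coverage lemma used in the proof of Theorem 3.) Let n ≥ 1 and let (X_1, Y_1), …, (X_{n+1}, Y_{n+1}) be exchangeable random pairs taking values in 𝒳 × ℝ, where 𝒳 is a measurable space. Let μ_1, …, μ_T : 𝒳 → ℝ be measurable regression functions. Define the selected model m* as the smallest index t ∈ {1, …, T} minimizing the augmented squared-error loss Σ_{i=1}^{n+1} (Y_i − μ_t(X_i))². Fix α ∈ (0,1) and let k = ⌈(1−α)(n+1)⌉; if k ≤ n, let Q be the k-th smallest value of the multiset {|Y_i − μ_{m*}(X_i)| : 1 ≤ i ≤ n}, and set Q = +∞ if k > n. Then P(|Y_{n+1} − μ_{m*}(X_{n+1})| ≤ Q) ≥ 1 − α. -/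
open MeasureTheory
open scoped ENNReal

noncomputable section

/-- The smallest index `t : Fin T` minimizing `f`. -/
def argminFin {T : ℕ} (hT : 0 < T) (f : Fin T → ℝ) : Fin T :=
  (Finset.univ.filter fun t => ∀ u, f t ≤ f u).min' (by
    obtain ⟨t, -, ht⟩ := Finset.exists_min_image Finset.univ f ⟨⟨0, hT⟩, Finset.mem_univ _⟩
    exact ⟨t, Finset.mem_filter.mpr ⟨Finset.mem_univ t, fun u => ht u (Finset.mem_univ u)⟩⟩)

/-- The `k`-th smallest element of a multiset of reals (`k` counted from 1). -/
def kthSmallest (s : Multiset ℝ) (k : ℕ) : ℝ :=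
  (s.sort (· ≤ ·)).getD (k - 1) 0

lemma count_small_ranks {m : ℕ} (r : Fin m → ℝ) (k : ℕ) (hk : k ≤ m) :
    k ≤ (Finset.univ.filter fun j =>
      (Finset.univ.filter fun i => r i < r j).card < k).card := by
  by_contra h
  push_neg at h
  set S := Finset.univ.filter fun j : Fin m =>
      (Finset.univ.filter fun i => r i < r j).card < k with hS
  have hcompl : (Sᶜ : Finset (Fin m)).Nonempty := by
    rw [← Finset.card_pos, Finset.card_compl]
    simp only [Fintype.card_fin]
    omega
  obtain ⟨j₀, hj₀mem, hj₀min⟩ := Finset.exists_min_image Sᶜ r hcompl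
  have hj₀ : ¬ ((Finset.univ.filter fun i => r i < r j₀).card < k) := by
    have := Finset.mem_compl.mp hj₀mem
    simpa [hS] using this
  push_neg at hj₀
  have hsub : (Finset.univ.filter fun i => r i < r j₀) ⊆ S := by
    intro i hi
    simp only [Finset.mem_filter, Finset.mem_univ, true_and] at hi
    by_contra hiS
    have : r j₀ ≤ r i := hj₀min i (Finset.mem_compl.mpr hiS)
    linarith
  have := Finset.card_le_card hsub
  omega

lemma le_kthSmallest {s : Multiset ℝ} {k : ℕ} (hk1 : 1 ≤ k) (hk2 : k ≤ Multiset.card s)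
    {c : ℝ} (h : (s.filter (· < c)).card < k) : c ≤ kthSmallest s k := by
  by_contra hlt
  push_neg at hlt
  set l := s.sort (· ≤ ·) with hl
  have hlen : l.length = Multiset.card s := s.length_sort _
  have hsorted : l.Pairwise (· ≤ ·) := Multiset.pairwise_sort (s := s) (r := (· ≤ ·))
  have hkl : k - 1 < l.length := by omega
  have hget : kthSmallest s k = l[k-1] := by
    rw [kthSmallest, ← hl, List.getD_eq_getElem l 0 hkl]
  have hcount : k ≤ l.countP (fun x => decide (x < c)) := by
    have htake : ∀ x ∈ l.take k, x < c := by
      intro x hx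
      obtain ⟨i, hi, hix⟩ := List.mem_take_iff_getElem.mp hx
      have hik : i < k := lt_of_lt_of_le hi (min_le_left _ _)
      have hile : l[i] ≤ l[k-1] := by
        rcases Nat.lt_or_ge i (k-1) with h' | h'
        · have := List.Pairwise.rel_get_of_lt hsorted (a := ⟨i, by omega⟩) (b := ⟨k-1, hkl⟩)
            (by simp [Fin.lt_def]; omega)
          simpa using this
        · have : i = k - 1 := by omega
          simp [this]
      rw [← hix]
      calc l[i] ≤ _ := hile
        _ < c := by rw [← hget]; exact hlt
    have h1 : (l.take k).countP (fun x => decide (x < c)) = (l.take k).length := by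
      apply List.countP_eq_length.mpr
      intro a ha; simpa using htake a ha
    have h2 : (l.take k).length = k := by
      rw [List.length_take]; omega
    calc k = (l.take k).countP (fun x => decide (x < c)) := by rw [h1, h2]
      _ ≤ l.countP _ := (List.take_sublist k l).countP_le
  have hcc : (s.filter (· < c)).card = l.countP (fun x => decide (x < c)) := by
    have : (l : Multiset ℝ) = s := s.sort_eq _
    rw [← this]
    simp [Multiset.filter_coe, List.countP_eq_length_filter]
  omega

lemma argminFin_eq_iff {T : ℕ} (hT : 0 < T) (f : Fin T → ℝ) (t : Fin T) :
    argminFin hT f = t ↔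
      ((∀ u, f t ≤ f u) ∧ ∀ t', (∀ u, f t' ≤ f u) → t ≤ t') := by
  constructor
  · rintro rfl
    have hmem := Finset.min'_mem (Finset.univ.filter fun t => ∀ u, f t ≤ f u)
      (by obtain ⟨t, -, ht⟩ := Finset.exists_min_image Finset.univ f ⟨⟨0, hT⟩, Finset.mem_univ _⟩
          exact ⟨t, Finset.mem_filter.mpr ⟨Finset.mem_univ t, fun u => ht u (Finset.mem_univ u)⟩⟩)
    refine ⟨(Finset.mem_filter.mp hmem).2, fun t' ht' => ?_⟩
    exact Finset.min'_le _ t' (Finset.mem_filter.mpr ⟨Finset.mem_univ _, ht'⟩)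
  · rintro ⟨h1, h2⟩
    apply le_antisymm
    · exact Finset.min'_le _ t (Finset.mem_filter.mpr ⟨Finset.mem_univ _, h1⟩)
    · apply Finset.le_min'
      intro y hy
      exact h2 y (Finset.mem_filter.mp hy).2

lemma measurable_argminFin {E : Type*} [MeasurableSpace E] {T : ℕ} (hT : 0 < T)
    (L : E → Fin T → ℝ) (hL : ∀ t, Measurable fun w => L w t) :
    Measurable fun w => argminFin hT (L w) := by
  apply measurable_to_countable'
  intro t
  have hset : (fun w => argminFin hT (L w)) ⁻¹' {t} =
      {w | ∀ u, L w t ≤ L w u} ∩ ⋂ t', {w | (∀ u, L w t' ≤ L w u) → t ≤ t'} := by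
    ext w
    simp only [Set.mem_preimage, Set.mem_singleton_iff, argminFin_eq_iff hT,
      Set.mem_inter_iff, Set.mem_setOf_eq, Set.mem_iInter]
  rw [hset]
  have h1 : ∀ t', MeasurableSet {w | ∀ u, L w t' ≤ L w u} := by
    intro t'
    have : {w | ∀ u, L w t' ≤ L w u} = ⋂ u, {w | L w t' ≤ L w u} := by ext w; simp
    rw [this]
    exact MeasurableSet.iInter fun u => measurableSet_le (hL t') (hL u)
  refine (h1 t).inter (MeasurableSet.iInter fun t' => ?_)
  by_cases htt : t ≤ t'
  · simp only [htt]; simp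
  · have : {w | (∀ u, L w t' ≤ L w u) → t ≤ t'} = {w | ∀ u, L w t' ≤ L w u}ᶜ := by
      ext w; simp [htt]
    rw [this]
    exact (h1 t').compl

lemma ofFn_filter_card {n : ℕ} (f : Fin n → ℝ) (p : ℝ → Prop) [DecidablePred p] :
    (Multiset.filter p ↑(List.ofFn f)).card =
      (Finset.univ.filter fun i => p (f i)).card := by
  classical
  rw [← Multiset.countP_eq_card_filter, List.ofFn_eq_map,
    show ((List.finRange n).map f : Multiset ℝ) = Multiset.map f ↑(List.finRange n) from rfl,
    Multiset.countP_map]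
  rfl

/-- **oracle coverage lemma in the proof of Theorem 3.**
The model `m*` minimizing the augmented squared-error loss (including the true test pair)
yields, after standard conformal calibration of its absolute residuals, a prediction
interval covering `Y_{n+1}` with probability at least `1 - α`.  The value `Q = +∞` when
`k > n` is encoded by the disjunct `n < k`. -/
theorem ces_regression_oracle_coverage
    {Ω 𝒳 : Type*} [MeasurableSpace Ω] [MeasurableSpace 𝒳]
    (P : Measure Ω) [IsProbabilityMeasure P]
    (n T : ℕ) (hn : 1 ≤ n) (hT : 0 < T)
    (X : Fin (n + 1) → Ω → 𝒳) (Y : Fin (n + 1) → Ω → ℝ)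
    (hXY : ∀ i, Measurable (fun ω => (X i ω, Y i ω)))
    (hexch : ∀ σ : Equiv.Perm (Fin (n + 1)),
      P.map (fun ω => fun i => (X (σ i) ω, Y (σ i) ω)) =
        P.map (fun ω => fun i => (X i ω, Y i ω)))
    (μreg : Fin T → 𝒳 → ℝ) (hμ : ∀ t, Measurable (μreg t))
    (α : ℝ) (hα : α ∈ Set.Ioo (0 : ℝ) 1) :
    ENNReal.ofReal (1 - α) ≤
      P {ω |
        let mstar : Fin T :=
          argminFin hT (fun t => ∑ i : Fin (n + 1), (Y i ω - μreg t (X i ω)) ^ 2)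
        let k : ℕ := ⌈(1 - α) * ((n : ℝ) + 1)⌉₊
        n < k ∨
          |Y (Fin.last n) ω - μreg mstar (X (Fin.last n) ω)| ≤
            kthSmallest
              (↑(List.ofFn fun i : Fin n =>
                |Y i.castSucc ω - μreg mstar (X i.castSucc ω)|)) k} := by
  classical
  obtain ⟨hα0, hα1⟩ := hα
  set k : ℕ := ⌈(1 - α) * ((n : ℝ) + 1)⌉₊ with hk
  -- trivial case k > n
  by_cases hkn : n < k
  · have : {ω : Ω |
        let mstar : Fin T :=
          argminFin hT (fun t => ∑ i : Fin (n + 1), (Y i ω - μreg t (X i ω)) ^ 2)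
        let k' : ℕ := ⌈(1 - α) * ((n : ℝ) + 1)⌉₊
        n < k' ∨
          |Y (Fin.last n) ω - μreg mstar (X (Fin.last n) ω)| ≤
            kthSmallest
              (↑(List.ofFn fun i : Fin n =>
                |Y i.castSucc ω - μreg mstar (X i.castSucc ω)|)) k'} = Set.univ := by
      ext ω
      simp only [Set.mem_setOf_eq, Set.mem_univ, iff_true]
      exact Or.inl hkn
    rw [this, measure_univ]
    exact le_trans (ENNReal.ofReal_le_one.mpr (by linarith)) le_rfl
  push_neg at hkn
  -- basic facts about k
  have hk1 : 1 ≤ k := by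
    rw [hk]
    apply Nat.one_le_ceil_iff.mpr
    have h1α : (0:ℝ) < 1 - α := by linarith
    positivity
  have hkn1 : k ≤ n + 1 := le_trans hkn (Nat.le_succ n)
  -- the data map
  set W : Ω → (Fin (n + 1) → 𝒳 × ℝ) := fun ω => fun i => (X i ω, Y i ω) with hW
  have hWm : Measurable W := measurable_pi_lambda _ (fun i => hXY i)
  set ν : Measure (Fin (n + 1) → 𝒳 × ℝ) := P.map W with hν
  haveI : IsProbabilityMeasure ν := by
    rw [hν]; exact Measure.isProbabilityMeasure_map hWm.aemeasurable
  -- loss, model selection, residuals on the canonical space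
  set L : (Fin (n + 1) → 𝒳 × ℝ) → Fin T → ℝ :=
    fun w t => ∑ i : Fin (n + 1), ((w i).2 - μreg t ((w i).1)) ^ 2 with hL
  set mst : (Fin (n + 1) → 𝒳 × ℝ) → Fin T := fun w => argminFin hT (L w) with hmst
  set R : (Fin (n + 1) → 𝒳 × ℝ) → Fin (n + 1) → ℝ :=
    fun w i => |(w i).2 - μreg (mst w) ((w i).1)| with hR
  set c : Fin (n + 1) → (Fin (n + 1) → 𝒳 × ℝ) → ℕ :=
    fun j w => (Finset.univ.filter fun i => R w i < R w j).card with hc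
  set A : Fin (n + 1) → Set (Fin (n + 1) → 𝒳 × ℝ) := fun j => {w | c j w < k} with hA
  -- measurability
  have hLm : ∀ t, Measurable fun w : Fin (n + 1) → 𝒳 × ℝ => L w t := by
    intro t
    apply Finset.measurable_sum
    intro i _
    have h2 : Measurable fun w : Fin (n + 1) → 𝒳 × ℝ => (w i).2 :=
      measurable_snd.comp (measurable_pi_apply i)
    have h1 : Measurable fun w : Fin (n + 1) → 𝒳 × ℝ => μreg t ((w i).1) :=
      (hμ t).comp (measurable_fst.comp (measurable_pi_apply i))
    exact (h2.sub h1).pow_const 2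
  have hmstm : Measurable mst := measurable_argminFin hT L hLm
  have hRm : ∀ i, Measurable fun w => R w i := by
    intro i
    have : (fun w => R w i) = fun w =>
        ∑ t : Fin T, if mst w = t then |(w i).2 - μreg t ((w i).1)| else 0 := by
      funext w
      rw [Finset.sum_ite_eq Finset.univ (mst w) (fun t => |(w i).2 - μreg t ((w i).1)|)]
      simp [hR]
    rw [this]
    apply Finset.measurable_sum
    intro t _
    have hcond : MeasurableSet {w : Fin (n + 1) → 𝒳 × ℝ | mst w = t} :=
      hmstm (MeasurableSet.singleton t)
    have h2 : Measurable fun w : Fin (n + 1) → 𝒳 × ℝ => (w i).2 :=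
      measurable_snd.comp (measurable_pi_apply i)
    have h1 : Measurable fun w : Fin (n + 1) → 𝒳 × ℝ => μreg t ((w i).1) :=
      (hμ t).comp (measurable_fst.comp (measurable_pi_apply i))
    exact Measurable.ite hcond (h2.sub h1).abs measurable_const
  have hcm : ∀ j, Measurable fun w => c j w := by
    intro j
    have : (fun w => c j w) = fun w =>
        ∑ i : Fin (n + 1), if R w i < R w j then 1 else 0 := by
      funext w
      simp only [hc, Finset.card_filter]
    rw [this]
    apply Finset.measurable_sum
    intro i _
    exact Measurable.ite (measurableSet_lt (hRm i) (hRm j)) measurable_const measurable_const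
  have hAm : ∀ j, MeasurableSet (A j) := by
    intro j
    have : A j = (fun w => c j w) ⁻¹' {m | m < k} := rfl
    rw [this]
    exact (hcm j) trivial
  -- invariance of mst / R under permutation
  have hLinv : ∀ (σ : Equiv.Perm (Fin (n + 1))) (w : Fin (n + 1) → 𝒳 × ℝ),
      L (fun i => w (σ i)) = L w := by
    intro σ w
    funext t
    rw [hL]
    exact Fintype.sum_equiv σ _ _ (fun i => rfl)
  have hRinv : ∀ (σ : Equiv.Perm (Fin (n + 1))) (w : Fin (n + 1) → 𝒳 × ℝ) (i : Fin (n + 1)),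
      R (fun i' => w (σ i')) i = R w (σ i) := by
    intro σ w i
    have hm : mst (fun i' => w (σ i')) = mst w := by
      show argminFin hT (L (fun i' => w (σ i'))) = argminFin hT (L w)
      rw [hLinv σ w]
    show |(w (σ i)).2 - μreg (mst (fun i' => w (σ i'))) ((w (σ i)).1)| =
      |(w (σ i)).2 - μreg (mst w) ((w (σ i)).1)|
    rw [hm]
  -- exchangeability transported to ν
  have hνexch : ∀ σ : Equiv.Perm (Fin (n + 1)),
      ν.map (fun w => fun i => w (σ i)) = ν := by
    intro σ
    have hperm : Measurable fun w : Fin (n + 1) → 𝒳 × ℝ => fun i => w (σ i) :=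
      measurable_pi_lambda _ (fun i => measurable_pi_apply (σ i))
    rw [hν, Measure.map_map hperm hWm]
    have : ((fun w : Fin (n + 1) → 𝒳 × ℝ => fun i => w (σ i)) ∘ W) =
        fun ω => fun i => (X (σ i) ω, Y (σ i) ω) := rfl
    rw [this]
    exact hexch σ
  -- all events A j have the same probability
  have hAeq : ∀ j, ν (A j) = ν (A (Fin.last n)) := by
    intro j
    set σ : Equiv.Perm (Fin (n + 1)) := Equiv.swap j (Fin.last n) with hσ
    have hperm : Measurable fun w : Fin (n + 1) → 𝒳 × ℝ => fun i => w (σ i) :=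
      measurable_pi_lambda _ (fun i => measurable_pi_apply (σ i))
    have hpre : (fun w : Fin (n + 1) → 𝒳 × ℝ => fun i => w (σ i)) ⁻¹' (A (Fin.last n)) = A j := by
      ext w
      simp only [Set.mem_preimage, hA, Set.mem_setOf_eq, hc]
      have hcnt : (Finset.univ.filter fun i =>
            R (fun i' => w (σ i')) i < R (fun i' => w (σ i')) (Fin.last n)).card =
          (Finset.univ.filter fun i => R w i < R w j).card := by
        have hlast : σ (Fin.last n) = j := by rw [hσ]; simp [Equiv.swap_apply_right]
        have : ∀ i, (R (fun i' => w (σ i')) i < R (fun i' => w (σ i')) (Fin.last n)) =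
            (R w (σ i) < R w j) := by
          intro i
          rw [hRinv σ w i, hRinv σ w (Fin.last n), hlast]
        simp_rw [this]
        apply Finset.card_nbij (fun i => σ i)
        · intro i hi
          simp only [Finset.mem_coe, Finset.mem_filter, Finset.mem_univ, true_and] at hi ⊢
          exact hi
        · intro a ha b hb hab
          exact σ.injective hab
        · intro i hi
          simp only [Finset.mem_coe, Finset.mem_filter, Finset.mem_univ, true_and] at hi ⊢
          exact ⟨σ.symm i, by simpa using hi, by simp⟩
      rw [hcnt]
    rw [← hpre, ← Measure.map_apply hperm (hAm (Fin.last n)), hνexch σ]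
  -- pointwise counting bound
  have hpoint : ∀ w, (k : ℝ≥0∞) ≤ ∑ j : Fin (n + 1), (A j).indicator (fun _ => 1) w := by
    intro w
    have hcard := count_small_ranks (R w) k hkn1
    set S := Finset.univ.filter fun j : Fin (n + 1) => c j w < k with hSdef
    have hSS : k ≤ S.card := by
      rw [hSdef]
      simpa [hc] using hcard
    calc (k : ℝ≥0∞) ≤ (S.card : ℝ≥0∞) := by exact_mod_cast hSS
      _ = ∑ j ∈ S, 1 := by simp
      _ = ∑ j ∈ S, (A j).indicator (fun _ => (1 : ℝ≥0∞)) w := by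
          apply Finset.sum_congr rfl
          intro j hj
          rw [hSdef] at hj
          simp only [Finset.mem_filter] at hj
          rw [Set.indicator_of_mem]
          exact hj.2
      _ ≤ ∑ j : Fin (n + 1), (A j).indicator (fun _ => 1) w := by
          apply Finset.sum_le_sum_of_subset (Finset.subset_univ S)
  -- integrate
  have hsum : (k : ℝ≥0∞) ≤ ∑ j : Fin (n + 1), ν (A j) := by
    have h1 : ∑ j : Fin (n + 1), ν (A j) =
        ∫⁻ w, ∑ j : Fin (n + 1), (A j).indicator (fun _ => 1) w ∂ν := by
      rw [lintegral_finset_sum]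
      · simp_rw [lintegral_indicator (hAm _)]
        simp
      · intro j _
        exact (measurable_const.indicator (hAm j))
    rw [h1]
    calc (k : ℝ≥0∞) = ∫⁻ _, (k : ℝ≥0∞) ∂ν := by simp
      _ ≤ _ := lintegral_mono (fun w => hpoint w)
  have hsum2 : ∑ j : Fin (n + 1), ν (A j) = (n + 1) * ν (A (Fin.last n)) := by
    rw [Finset.sum_congr rfl (fun j _ => hAeq j)]
    simp [Finset.card_univ, mul_comm]
  -- conclude ν (A last) ≥ 1 - α
  have hbound : ENNReal.ofReal (1 - α) ≤ ν (A (Fin.last n)) := by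
    rw [hsum2] at hsum
    have hne : ((n : ℝ≥0∞) + 1) ≠ 0 := by simp
    have hnetop : ((n : ℝ≥0∞) + 1) ≠ ⊤ := by
      simp [ENNReal.add_ne_top]
    have hdiv : (k : ℝ≥0∞) / ((n : ℝ≥0∞) + 1) ≤ ν (A (Fin.last n)) := by
      rw [ENNReal.div_le_iff hne hnetop]
      calc (k : ℝ≥0∞) ≤ (n + 1) * ν (A (Fin.last n)) := hsum
        _ = ν (A (Fin.last n)) * (n + 1) := by ring
    refine le_trans ?_ hdiv
    have hkk : (1 - α) * ((n : ℝ) + 1) ≤ (k : ℝ) := Nat.le_ceil _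
    rw [show (k : ℝ≥0∞) = ENNReal.ofReal (k : ℝ) by simp,
      show ((n : ℝ≥0∞) + 1) = ENNReal.ofReal ((n : ℝ) + 1) by
        rw [ENNReal.ofReal_add (by positivity) zero_le_one]; simp,
      ← ENNReal.ofReal_div_of_pos (by positivity)]
    apply ENNReal.ofReal_le_ofReal
    rw [le_div_iff₀ (by positivity)]
    exact hkk
  -- transfer back: the target event contains W ⁻¹' (A last)
  refine le_trans hbound ?_
  rw [hν, Measure.map_apply hWm (hAm (Fin.last n))]
  apply measure_mono
  intro ω hω
  simp only [Set.mem_preimage, hA, Set.mem_setOf_eq, hc] at hω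
  simp only [Set.mem_setOf_eq]
  right
  -- identify mstar with mst (W ω)
  have hms : mst (W ω) = argminFin hT
      (fun t => ∑ i : Fin (n + 1), (Y i ω - μreg t (X i ω)) ^ 2) := rfl
  set m0 := argminFin hT (fun t => ∑ i : Fin (n + 1), (Y i ω - μreg t (X i ω)) ^ 2) with hm0
  -- apply le_kthSmallest
  apply le_kthSmallest hk1
  · simpa using hkn
  · -- count over the list of first n residuals is < k
    rw [ofFn_filter_card]
    have hRW : ∀ i, R (W ω) i = |Y i ω - μreg m0 (X i ω)| := by
      intro i
      rw [hR, ← hms]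
    have hle : (Finset.univ.filter fun i : Fin n =>
          |Y i.castSucc ω - μreg m0 (X i.castSucc ω)| < |Y (Fin.last n) ω - μreg m0 (X (Fin.last n) ω)|).card ≤
        (Finset.univ.filter fun i : Fin (n + 1) => R (W ω) i < R (W ω) (Fin.last n)).card := by
      apply Finset.card_le_card_of_injOn (fun i => i.castSucc)
      · intro i hi
        simp only [Finset.mem_coe, Finset.mem_filter, Finset.mem_univ, true_and] at hi ⊢
        simp only [hRW]
        exact hi
      · intro a _ b _ hab
        exact Fin.castSucc_injective n hab
    calc _ ≤ _ := hle
      _ < k := hω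

end
end

section
/- (Theorem 4, conformalized early stopping for quantile regression.) Let n ≥ 1 and let (X_1, Y_1), …, (X_{n+1}, Y_{n+1}) be exchangeable random pairs taking values in 𝒳 × ℝ, where 𝒳 is a measurable space. Fix β_lo, β_hi ∈ (0,1) and α ∈ (0,1). Let q^lo_1, …, q^lo_T : 𝒳 → ℝ and q^hi_1, …, q^hi_T : 𝒳 → ℝ be measurable quantile regression functions. For (x, y) ∈ 𝒳 × ℝ, let m_lo(x, y) be the smallest index t minimizing Σ_{i=1}^{n} ρ_{β_lo}(Y_i, q^lo_t(X_i)) + ρ_{β_lo}(y, q^lo_t(x)) over t ∈ {1, …, T}, and let m_hi(x, y) be the smallest index t minimizing Σ_{i=1}^{n} ρ_{β_hi}(Y_i, q^hi_t(X_i)) + ρ_{β_hi}(y, q^hi_t(x)). For (a, b) ∈ {1, …, T}², define scores E_i(a, b) = max(q^lo_a(X_i) − Y_i, Y_i − q^hi_b(X_i)) for 1 ≤ i ≤ n, and let Q(a, b) be the ⌈(1−α)(n+1)⌉-th smallest value of {E_i(a, b) : 1 ≤ i ≤ n} (equal to +∞ if ⌈(1−α)(n+1)⌉ > n). Define Ĉ_α(X_{n+1})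 as the convex hull of the set {y ∈ ℝ : q^lo_{m_lo(X_{n+1}, y)}(X_{n+1}) − Q(m_lo(X_{n+1}, y), m_hi(X_{n+1}, y)) ≤ y ≤ q^hi_{m_hi(X_{n+1}, y)}(X_{n+1}) + Q(m_lo(X_{n+1}, y), m_hi(X_{n+1}, y))}. Then P(Y_{n+1} ∈ Ĉ_α(X_{n+1})) ≥ 1 − α. -/
open MeasureTheory

noncomputable section

/-- The pinball (quantile) loss `ρ_β(y, q)`. -/
def pinball (β y q : ℝ) : ℝ := if q < y then β * (y - q) else (1 - β) * (q - y)

namespace CESAux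

lemma kthSmallest_le_iff (s : Multiset ℝ) (k : ℕ) (hk1 : 1 ≤ k) (hk : k ≤ Multiset.card s)
    (q : ℝ) : kthSmallest s k ≤ q ↔ k ≤ s.countP (· ≤ q) := by
  set l := s.sort (· ≤ ·) with hl
  have hlen : l.length = Multiset.card s := s.length_sort _
  have hsort : l.Pairwise (· ≤ ·) := s.pairwise_sort _
  have hcnt : s.countP (· ≤ q) = l.countP (fun x => decide (x ≤ q)) := by
    conv_lhs => rw [← s.sort_eq (· ≤ ·)]
    rfl
  have hidx : k - 1 < l.length := by omega
  have hget : kthSmallest s k = l.get ⟨k - 1, hidx⟩ := by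
    rw [kthSmallest, ← hl, List.getD_eq_getElem _ _ hidx]
    rfl
  rw [hget, hcnt]
  constructor
  · intro h
    have : l = l.take k ++ l.drop k := (List.take_append_drop k l).symm
    rw [this, List.countP_append]
    have htk : (l.take k).countP (fun x => decide (x ≤ q)) = k := by
      rw [List.countP_eq_length.mpr, List.length_take]
      · omega
      · intro a ha
        obtain ⟨i, hi, rfl⟩ := List.mem_take_iff_getElem.mp ha
        have : l[i] ≤ l.get ⟨k - 1, hidx⟩ := by
          apply hsort.rel_get_of_le
          simp only [Fin.mk_le_mk]
          omega
        simpa using le_trans this h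
    omega
  · intro h
    by_contra hq
    push_neg at hq
    have : l = l.take (k-1) ++ l.drop (k-1) := (List.take_append_drop (k-1) l).symm
    rw [this, List.countP_append] at h
    have h1 : (l.take (k-1)).countP (fun x => decide (x ≤ q)) ≤ k - 1 := by
      calc (l.take (k-1)).countP (fun x => decide (x ≤ q)) ≤ (l.take (k-1)).length :=
        List.countP_le_length
      _ ≤ k - 1 := by rw [List.length_take]; omega
    have h2 : (l.drop (k-1)).countP (fun x => decide (x ≤ q)) = 0 := by
      rw [List.countP_eq_zero]
      intro a ha
      obtain ⟨i, hi, rfl⟩ := List.mem_drop_iff_getElem.mp ha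
      have : l.get ⟨k - 1, hidx⟩ ≤ l[k - 1 + i] := by
        apply hsort.rel_get_of_le
        simp only [Fin.mk_le_mk]
        omega
      simp only [decide_eq_true_eq]
      push_neg
      linarith
    omega

lemma le_countP_kthSmallest (s : Multiset ℝ) (k : ℕ) (hk1 : 1 ≤ k) (hk : k ≤ Multiset.card s) :
    k ≤ s.countP (· ≤ kthSmallest s k) :=
  (kthSmallest_le_iff s k hk1 hk _).mp le_rfl

lemma kthSmallest_mono (s t : Multiset ℝ) (h : s ≤ t) (k : ℕ) (hk1 : 1 ≤ k)
    (hk : k ≤ Multiset.card s) : kthSmallest t k ≤ kthSmallest s k := by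
  rw [kthSmallest_le_iff t k hk1 (hk.trans (Multiset.card_le_card h))]
  exact le_trans (le_countP_kthSmallest s k hk1 hk) (Multiset.countP_le_of_le _ h)

lemma argminFin_eq_iff {T : ℕ} (hT : 0 < T) (f : Fin T → ℝ) (t : Fin T) :
    argminFin hT f = t ↔ (∀ u, f t ≤ f u) ∧ ∀ s : Fin T, (∀ u, f s ≤ f u) → t ≤ s := by
  unfold argminFin
  constructor
  · intro h
    have hmem := Finset.min'_mem (Finset.univ.filter fun t => ∀ u, f t ≤ f u)
      (by obtain ⟨t', -, ht⟩ := Finset.exists_min_image Finset.univ f ⟨⟨0, hT⟩, Finset.mem_univ _⟩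
          exact ⟨t', Finset.mem_filter.mpr ⟨Finset.mem_univ t', fun u => ht u (Finset.mem_univ u)⟩⟩)
    rw [h] at hmem
    refine ⟨(Finset.mem_filter.mp hmem).2, fun s hs => ?_⟩
    rw [← h]
    exact Finset.min'_le _ _ (Finset.mem_filter.mpr ⟨Finset.mem_univ s, hs⟩)
  · rintro ⟨h1, h2⟩
    apply le_antisymm
    · exact Finset.min'_le _ _ (Finset.mem_filter.mpr ⟨Finset.mem_univ t, h1⟩)
    · exact Finset.le_min' _ _ _ fun s hs => h2 s (Finset.mem_filter.mp hs).2

lemma measurableSet_argmin {δ : Type*} [MeasurableSpace δ] {T : ℕ} (hT : 0 < T)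
    (L : Fin T → δ → ℝ) (hL : ∀ t, Measurable (L t)) (t : Fin T) :
    MeasurableSet {d | argminFin hT (fun u => L u d) = t} := by
  have heq : {d | argminFin hT (fun u => L u d) = t} =
      (⋂ u, {d | L t d ≤ L u d}) ∩
      (⋂ s : Fin T, {d | ∀ u, L s d ≤ L u d}ᶜ ∪ {d | t ≤ s}) := by
    ext d
    simp only [Set.mem_setOf_eq, Set.mem_inter_iff, Set.mem_iInter, Set.mem_union,
      Set.mem_compl_iff, argminFin_eq_iff]
    constructor
    · rintro ⟨h1, h2⟩
      exact ⟨h1, fun s => by by_cases hs : ∀ u, L s d ≤ L u d; exacts [Or.inr (h2 s hs), Or.inl hs]⟩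
    · rintro ⟨h1, h2⟩
      exact ⟨h1, fun s hs => (h2 s).resolve_left (not_not_intro hs)⟩
  rw [heq]
  refine MeasurableSet.inter (MeasurableSet.iInter fun u => measurableSet_le (hL t) (hL u))
    (MeasurableSet.iInter fun s => MeasurableSet.union ?_ ?_)
  · have : {d | ∀ u, L s d ≤ L u d} = ⋂ u, {d | L s d ≤ L u d} := by ext d; simp
    rw [this]
    exact (MeasurableSet.iInter fun u => measurableSet_le (hL s) (hL u)).compl
  · by_cases h : t ≤ s
    · simp [h]
    · simp [h]

lemma measurable_kthSmallest {δ : Type*} [MeasurableSpace δ] {m k : ℕ}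
    (hk1 : 1 ≤ k) (hk : k ≤ m) (v : Fin m → δ → ℝ) (hv : ∀ i, Measurable (v i)) :
    Measurable (fun d => kthSmallest (Multiset.map (fun i => v i d) Finset.univ.val) k) := by
  apply measurable_of_Iic
  intro q
  have hcard : ∀ d, Multiset.card (Multiset.map (fun i => v i d) Finset.univ.val) = m := by
    intro d; simp
  have heq : (fun d => kthSmallest (Multiset.map (fun i => v i d) Finset.univ.val) k) ⁻¹' Set.Iic q
      = {d | k ≤ ∑ i : Fin m, if v i d ≤ q then 1 else 0} := by
    ext d
    simp only [Set.mem_preimage, Set.mem_Iic, Set.mem_setOf_eq,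
      kthSmallest_le_iff _ k hk1 (by rw [hcard d]; exact hk)]
    rw [Multiset.countP_map]
    have haux : ∀ p : Fin m → Prop, ∀ dp : DecidablePred p,
        Multiset.card (Multiset.filter p Finset.univ.val) =
        ∑ i : Fin m, if p i then 1 else 0 := by
      intro p dp
      rw [← Finset.filter_val, ← Finset.card_def, Finset.card_filter]
    rw [haux]
  rw [heq]
  have hm : Measurable (fun d => ∑ i : Fin m, if v i d ≤ q then (1:ℕ) else 0) := by
    apply Finset.measurable_sum
    intro i _
    exact Measurable.ite (measurableSet_le (hv i) measurable_const) measurable_const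
      measurable_const
  exact hm (by trivial : MeasurableSet {x : ℕ | k ≤ x})

lemma measurable_select {δ : Type*} [MeasurableSpace δ] {T : ℕ} (m : δ → Fin T)
    (hm : ∀ t, MeasurableSet {d | m d = t}) (g : Fin T → δ → ℝ)
    (hg : ∀ t, Measurable (g t)) : Measurable (fun d => g (m d) d) := by
  have heq : (fun d => g (m d) d) = fun d => ∑ t : Fin T, if m d = t then g t d else 0 := by
    funext d
    rw [Finset.sum_ite_eq (Finset.univ) (m d) (fun t => g t d)]
    simp
  rw [heq]
  exact Finset.measurable_sum _ fun t _ =>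
    Measurable.ite (hm t) (hg t) measurable_const

open Classical in
lemma le_sum_measure {δ : Type*} [MeasurableSpace δ] (μ : MeasureTheory.Measure δ)
    {m : ℕ} (A : Fin m → Set δ) (hA : ∀ i, MeasurableSet (A i)) (k : ℕ)
    (hcount : ∀ d, (k:ℕ) ≤ ∑ i, if d ∈ A i then 1 else 0) :
    (k : ENNReal) * μ Set.univ ≤ ∑ i, μ (A i) := by
  have h1 : ∑ i, μ (A i) = ∫⁻ d, ∑ i, (A i).indicator (1 : δ → ENNReal) d ∂μ := by
    rw [lintegral_finset_sum _ (fun i _ => (measurable_one.indicator (hA i)))]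
    congr 1
    funext i
    exact (lintegral_indicator_one (hA i)).symm
  rw [h1]
  have h2 : ∀ d, (k : ENNReal) ≤ ∑ i, (A i).indicator (1 : δ → ENNReal) d := by
    intro d
    calc (k : ENNReal) ≤ ((∑ i, if d ∈ A i then 1 else 0 : ℕ) : ENNReal) := by
          exact_mod_cast hcount d
      _ = ∑ i, (A i).indicator (1 : δ → ENNReal) d := by
          rw [Nat.cast_sum]
          refine Finset.sum_congr rfl fun i _ => ?_
          by_cases h : d ∈ A i <;> simp [h]
  calc (k : ENNReal) * μ Set.univ = ∫⁻ _, (k:ENNReal) ∂μ := by rw [lintegral_const]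
    _ ≤ _ := lintegral_mono h2

lemma measurable_pinball {δ : Type*} [MeasurableSpace δ] (β : ℝ) {f g : δ → ℝ}
    (hf : Measurable f) (hg : Measurable g) :
    Measurable (fun d => pinball β (f d) (g d)) := by
  unfold pinball
  exact Measurable.ite (measurableSet_lt hg hf)
    (measurable_const.mul (hf.sub hg)) (measurable_const.mul (hg.sub hf))

lemma ofFn_coe {n : ℕ} (g : Fin n → ℝ) :
    (↑(List.ofFn g) : Multiset ℝ) = Multiset.map g Finset.univ.val := by
  rw [List.ofFn_eq_map]
  rfl

end CESAux

open CESAux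

/-- **Theorem 4, CES for quantile regression.**  For each placeholder
value `y`, the low and high quantile models minimizing the augmented pinball losses
are selected; the prediction interval is the convex hull of all `y` covered by the
CQR interval built from the selected models.  The case `Q = +∞` for
`⌈(1-α)(n+1)⌉ > n` is encoded by the disjunct `n < k`.  It has marginal
coverage `1 - α`. -/
theorem ces_quantile_regression_coverage
    {Ω 𝒳 : Type*} [MeasurableSpace Ω] [MeasurableSpace 𝒳]
    (P : Measure Ω) [IsProbabilityMeasure P]
    (n T : ℕ) (hn : 1 ≤ n) (hT : 0 < T)
    (X : Fin (n + 1) → Ω → 𝒳) (Y : Fin (n + 1) → Ω → ℝ)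
    (hXY : ∀ i, Measurable (fun ω => (X i ω, Y i ω)))
    (hexch : ∀ σ : Equiv.Perm (Fin (n + 1)),
      P.map (fun ω => fun i => (X (σ i) ω, Y (σ i) ω)) =
        P.map (fun ω => fun i => (X i ω, Y i ω)))
    (βlo βhi : ℝ) (hβlo : βlo ∈ Set.Ioo (0 : ℝ) 1) (hβhi : βhi ∈ Set.Ioo (0 : ℝ) 1)
    (qlo qhi : Fin T → 𝒳 → ℝ)
    (hqlo : ∀ t, Measurable (qlo t)) (hqhi : ∀ t, Measurable (qhi t))
    (α : ℝ) (hα : α ∈ Set.Ioo (0 : ℝ) 1) :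
    ENNReal.ofReal (1 - α) ≤
      P {ω |
        Y (Fin.last n) ω ∈ convexHull ℝ {y : ℝ |
          let mlo : Fin T := argminFin hT (fun t =>
            (∑ i : Fin n, pinball βlo (Y i.castSucc ω) (qlo t (X i.castSucc ω))) +
              pinball βlo y (qlo t (X (Fin.last n) ω)))
          let mhi : Fin T := argminFin hT (fun t =>
            (∑ i : Fin n, pinball βhi (Y i.castSucc ω) (qhi t (X i.castSucc ω))) +
              pinball βhi y (qhi t (X (Fin.last n) ω)))
          let k : ℕ := ⌈(1 - α) * ((n : ℝ) + 1)⌉₊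
          let Q : ℝ := kthSmallest
            (↑(List.ofFn fun i : Fin n =>
              max (qlo mlo (X i.castSucc ω) - Y i.castSucc ω)
                (Y i.castSucc ω - qhi mhi (X i.castSucc ω)))) k
          n < k ∨
            (qlo mlo (X (Fin.last n) ω) - Q ≤ y ∧
              y ≤ qhi mhi (X (Fin.last n) ω) + Q)}} := by
  classical
  obtain ⟨hα0, hα1⟩ := hα
  set k : ℕ := ⌈(1 - α) * ((n : ℝ) + 1)⌉₊ with hkdef
  by_cases hkn : n < k
  · -- trivial case: the interval is all of ℝ
    calc ENNReal.ofReal (1 - α) ≤ 1 := ENNReal.ofReal_le_one.mpr (by linarith)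
      _ = P Set.univ := measure_univ.symm
      _ ≤ _ := by
        refine measure_mono fun ω _ => ?_
        show Y (Fin.last n) ω ∈ convexHull ℝ _
        exact subset_convexHull ℝ _ (Or.inl hkn)
  · push_neg at hkn
    have hpos : (0:ℝ) < (1 - α) * ((n:ℝ) + 1) := by
      apply mul_pos (by linarith)
      positivity
    have hk1 : 1 ≤ k := Nat.ceil_pos.mpr hpos
    have hkn1 : k ≤ n + 1 := hkn.trans (Nat.le_succ n)
    -- the data map and its law
    set data : Ω → Fin (n+1) → 𝒳 × ℝ := fun ω i => (X i ω, Y i ω) with hdatadef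
    have hdata : Measurable data := measurable_pi_lambda _ hXY
    set μ : Measure (Fin (n+1) → 𝒳 × ℝ) := P.map data with hμdef
    have hμprob : IsProbabilityMeasure μ := Measure.isProbabilityMeasure_map hdata.aemeasurable
    -- symmetric losses, model selection, scores
    set Llo : Fin T → (Fin (n+1) → 𝒳 × ℝ) → ℝ :=
      fun t d => ∑ j, pinball βlo (d j).2 (qlo t (d j).1) with hLlodef
    set Lhi : Fin T → (Fin (n+1) → 𝒳 × ℝ) → ℝ :=
      fun t d => ∑ j, pinball βhi (d j).2 (qhi t (d j).1) with hLhidef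
    set mloF : (Fin (n+1) → 𝒳 × ℝ) → Fin T := fun d => argminFin hT (fun t => Llo t d)
      with hmloFdef
    set mhiF : (Fin (n+1) → 𝒳 × ℝ) → Fin T := fun d => argminFin hT (fun t => Lhi t d)
      with hmhiFdef
    set E : (Fin (n+1) → 𝒳 × ℝ) → Fin (n+1) → ℝ := fun d i =>
      max (qlo (mloF d) (d i).1 - (d i).2) ((d i).2 - qhi (mhiF d) (d i).1) with hEdef
    set Qf : (Fin (n+1) → 𝒳 × ℝ) → ℝ :=
      fun d => kthSmallest (Multiset.map (fun i => E d i) Finset.univ.val) k with hQfdef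
    set A : Fin (n+1) → Set (Fin (n+1) → 𝒳 × ℝ) := fun i => {d | E d i ≤ Qf d} with hAdef
    -- measurability
    have hLlom : ∀ t, Measurable (Llo t) := fun t =>
      Finset.measurable_sum _ fun j _ => measurable_pinball βlo
        ((measurable_pi_apply j).snd) ((hqlo t).comp (measurable_pi_apply j).fst)
    have hLhim : ∀ t, Measurable (Lhi t) := fun t =>
      Finset.measurable_sum _ fun j _ => measurable_pinball βhi
        ((measurable_pi_apply j).snd) ((hqhi t).comp (measurable_pi_apply j).fst)
    have hmlom : ∀ t, MeasurableSet {d | mloF d = t} := fun t =>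
      measurableSet_argmin hT Llo hLlom t
    have hmhim : ∀ t, MeasurableSet {d | mhiF d = t} := fun t =>
      measurableSet_argmin hT Lhi hLhim t
    have hEm : ∀ i, Measurable (fun d => E d i) := by
      intro i
      apply Measurable.max
      · apply Measurable.sub
        · exact measurable_select mloF hmlom (fun a d => qlo a (d i).1)
            (fun a => (hqlo a).comp (measurable_pi_apply i).fst)
        · exact (measurable_pi_apply i).snd
      · apply Measurable.sub
        · exact (measurable_pi_apply i).snd
        · exact measurable_select mhiF hmhim (fun a d => qhi a (d i).1)
            (fun a => (hqhi a).comp (measurable_pi_apply i).fst)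
    have hQfm : Measurable Qf := measurable_kthSmallest hk1 hkn1 (fun i d => E d i) hEm
    have hAm : ∀ i, MeasurableSet (A i) := fun i => measurableSet_le (hEm i) hQfm
    -- equivariance of scores
    have hperm : ∀ σ : Equiv.Perm (Fin (n+1)), ∀ d,
        (fun j => E (d ∘ σ) j) = fun j => E d (σ j) := by
      intro σ d
      have hmloeq : mloF (d ∘ σ) = mloF d := by
        have hfe : (fun t => Llo t (d ∘ σ)) = fun t => Llo t d := by
          funext t
          exact Fintype.sum_equiv σ _ _ (fun j => rfl)
        simp only [hmloFdef, hfe]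
      have hmhieq : mhiF (d ∘ σ) = mhiF d := by
        have hfe : (fun t => Lhi t (d ∘ σ)) = fun t => Lhi t d := by
          funext t
          exact Fintype.sum_equiv σ _ _ (fun j => rfl)
        simp only [hmhiFdef, hfe]
      funext j
      simp only [hEdef, hmloeq, hmhieq, Function.comp_apply]
    have hmulti : ∀ σ : Equiv.Perm (Fin (n+1)), ∀ d,
        Multiset.map (fun i => E (d ∘ σ) i) Finset.univ.val =
          Multiset.map (fun i => E d i) Finset.univ.val := by
      intro σ d
      rw [hperm σ d]
      rw [show (fun i => E d (σ i)) = (fun i => E d i) ∘ σ from rfl, ← Multiset.map_map]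
      congr 1
      have := congrArg Finset.val (Finset.map_univ_equiv σ)
      rwa [Finset.map_val] at this
    have hQfeq : ∀ σ : Equiv.Perm (Fin (n+1)), ∀ d, Qf (d ∘ σ) = Qf d := by
      intro σ d
      simp only [hQfdef, hmulti σ d]
    -- invariance of the law
    have hmapμ : ∀ σ : Equiv.Perm (Fin (n+1)),
        μ.map (fun d => d ∘ σ) = μ := by
      intro σ
      have hcomp : Measurable (fun d : Fin (n+1) → 𝒳 × ℝ => d ∘ σ) :=
        measurable_pi_lambda _ fun i => measurable_pi_apply (σ i)
      rw [hμdef, Measure.map_map hcomp hdata]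
      exact hexch σ
    -- all the events have the same probability
    have hAeq : ∀ i, μ (A i) = μ (A (Fin.last n)) := by
      intro i
      set σ : Equiv.Perm (Fin (n+1)) := Equiv.swap i (Fin.last n) with hσdef
      have hcomp : Measurable (fun d : Fin (n+1) → 𝒳 × ℝ => d ∘ σ) :=
        measurable_pi_lambda _ fun j => measurable_pi_apply (σ j)
      have hpre : (fun d : Fin (n+1) → 𝒳 × ℝ => d ∘ σ) ⁻¹' (A (Fin.last n)) = A i := by
        ext d
        simp only [Set.mem_preimage, hAdef, Set.mem_setOf_eq]
        rw [congrFun (hperm σ d) (Fin.last n), hQfeq σ d, hσdef, Equiv.swap_apply_right]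
      calc μ (A i) = μ.map (fun d => d ∘ σ) (A (Fin.last n)) := by
            rw [Measure.map_apply hcomp (hAm (Fin.last n)), hpre]
        _ = μ (A (Fin.last n)) := by rw [hmapμ σ]
    -- counting: at least k of the n+1 events hold pointwise
    have hcount : ∀ d, k ≤ ∑ i : Fin (n+1), if d ∈ A i then 1 else 0 := by
      intro d
      have h1 : k ≤ (Multiset.map (fun i => E d i) Finset.univ.val).countP (· ≤ Qf d) :=
        le_countP_kthSmallest _ k hk1 (by simp [hkn1])
      rw [Multiset.countP_map] at h1
      have haux : ∀ p : Fin (n+1) → Prop, ∀ dp : DecidablePred p,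
          Multiset.card (Multiset.filter p Finset.univ.val) =
          ∑ i : Fin (n+1), if p i then 1 else 0 := by
        intro p dp
        rw [← Finset.filter_val, ← Finset.card_def, Finset.card_filter]
      rw [haux] at h1
      refine h1.trans (le_of_eq (Finset.sum_congr rfl fun i _ => ?_))
      by_cases h : E d i ≤ Qf d
      · simp only [if_pos h, if_pos (show d ∈ A i from h)]
      · simp only [if_neg h, if_neg (show d ∉ A i from h)]
    -- probability lower bound for the last event
    have hsum : (k : ENNReal) ≤ ∑ i : Fin (n+1), μ (A i) := by
      have := le_sum_measure μ A hAm k (by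
        intro d
        refine (hcount d).trans (le_of_eq (Finset.sum_congr rfl fun i _ => ?_))
        by_cases h : d ∈ A i
        · simp [h]
        · simp [h])
      rwa [measure_univ, mul_one] at this
    have hlast : ENNReal.ofReal (1 - α) ≤ μ (A (Fin.last n)) := by
      have h2 : (k:ENNReal) ≤ ((n:ENNReal)+1) * μ (A (Fin.last n)) := by
        calc (k:ENNReal) ≤ ∑ i : Fin (n+1), μ (A i) := hsum
          _ = ∑ _i : Fin (n+1), μ (A (Fin.last n)) :=
              Finset.sum_congr rfl (fun i _ => hAeq i)
          _ = ((n:ENNReal)+1) * μ (A (Fin.last n)) := by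
              rw [Finset.sum_const, Finset.card_univ, Fintype.card_fin, nsmul_eq_mul]
              push_cast
              ring
      have hof : ENNReal.ofReal (1 - α) * ((n:ENNReal)+1) ≤ (k:ENNReal) := by
        have hr : (1 - α) * ((n:ℝ)+1) ≤ (k:ℝ) := Nat.le_ceil _
        calc ENNReal.ofReal (1 - α) * ((n:ENNReal)+1)
            = ENNReal.ofReal ((1 - α) * ((n:ℝ)+1)) := by
              rw [ENNReal.ofReal_mul (by linarith)]
              congr 1
              rw [show ((n:ℝ)+1) = ((n+1 : ℕ) : ℝ) by push_cast; ring,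
                ENNReal.ofReal_natCast]
              push_cast
              ring
          _ ≤ ENNReal.ofReal (k:ℝ) := ENNReal.ofReal_le_ofReal hr
          _ = (k:ENNReal) := ENNReal.ofReal_natCast k
      have hne0 : ((n:ENNReal)+1) ≠ 0 := by simp
      have hnetop : ((n:ENNReal)+1) ≠ ⊤ := by
        simp [ENNReal.add_eq_top]
      have := hof.trans h2
      rw [mul_comm (ENNReal.ofReal (1 - α)) _] at this
      exact (ENNReal.mul_le_mul_iff_right hne0 hnetop).mp this
    -- transfer to Ω and include into the target event
    have hmuP : μ (A (Fin.last n)) = P (data ⁻¹' A (Fin.last n)) :=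
      Measure.map_apply hdata (hAm (Fin.last n))
    refine hlast.trans (le_of_le_of_eq (le_of_eq hmuP) rfl) |>.trans (measure_mono ?_)
    -- inclusion of the event into the coverage event
    intro ω hω
    have hω' : E (data ω) (Fin.last n) ≤ Qf (data ω) := hω
    -- identify the selected models
    have hml : argminFin hT (fun t =>
        (∑ i : Fin n, pinball βlo (Y i.castSucc ω) (qlo t (X i.castSucc ω))) +
          pinball βlo (Y (Fin.last n) ω) (qlo t (X (Fin.last n) ω))) = mloF (data ω) := by
      rw [hmloFdef]
      congr 1
      funext t
      rw [hLlodef]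
      exact (Fin.sum_univ_castSucc
        (fun j => pinball βlo ((data ω) j).2 (qlo t ((data ω) j).1))).symm
    have hmh : argminFin hT (fun t =>
        (∑ i : Fin n, pinball βhi (Y i.castSucc ω) (qhi t (X i.castSucc ω))) +
          pinball βhi (Y (Fin.last n) ω) (qhi t (X (Fin.last n) ω))) = mhiF (data ω) := by
      rw [hmhiFdef]
      congr 1
      funext t
      rw [hLhidef]
      exact (Fin.sum_univ_castSucc
        (fun j => pinball βhi ((data ω) j).2 (qhi t ((data ω) j).1))).symm
    refine subset_convexHull ℝ _ ?_
    show _ ∈ {y : ℝ | _}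
    rw [Set.mem_setOf_eq]
    dsimp only
    rw [hml, hmh]
    refine Or.inr ?_
    -- the statement's Q is at least Qf (data ω)
    have hQle : Qf (data ω) ≤ kthSmallest
        (↑(List.ofFn fun i : Fin n =>
          max (qlo (mloF (data ω)) (X i.castSucc ω) - Y i.castSucc ω)
            (Y i.castSucc ω - qhi (mhiF (data ω)) (X i.castSucc ω)))) k := by
      rw [show (fun i : Fin n =>
          max (qlo (mloF (data ω)) (X i.castSucc ω) - Y i.castSucc ω)
            (Y i.castSucc ω - qhi (mhiF (data ω)) (X i.castSucc ω)))
          = fun i : Fin n => E (data ω) i.castSucc from rfl]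
      rw [ofFn_coe]
      refine kthSmallest_mono _ _ ?_ k hk1 (by simp [hkn])
      rw [show (fun i : Fin n => E (data ω) i.castSucc)
          = (fun i => E (data ω) i) ∘ Fin.castSucc from rfl, ← Multiset.map_map]
      apply Multiset.map_le_map
      have h1 : Multiset.map Fin.castSucc Finset.univ.val =
          (Finset.univ.map (Fin.castSuccEmb : Fin n ↪ Fin (n+1))).val := by
        rw [Finset.map_val]
        rfl
      rw [h1]
      exact Finset.val_le_iff.mpr (Finset.subset_univ _)
    have hEle : max (qlo (mloF (data ω)) (X (Fin.last n) ω) - Y (Fin.last n) ω)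
        (Y (Fin.last n) ω - qhi (mhiF (data ω)) (X (Fin.last n) ω)) ≤ kthSmallest
        (↑(List.ofFn fun i : Fin n =>
          max (qlo (mloF (data ω)) (X i.castSucc ω) - Y i.castSucc ω)
            (Y i.castSucc ω - qhi (mhiF (data ω)) (X i.castSucc ω)))) k :=
      le_trans hω' hQle
    constructor
    · have := le_trans (le_max_left _ _) hEle
      linarith
    · have := le_trans (le_max_right _ _) hEle
      linarith

end
end

section
/- (Proposition A1, Markov-type lower bound.) Let n ≥ 1, α ∈ (0,1), and set l = ⌊α(n+1)⌋; assume 1 ≤ l ≤ n. Let T ≥ 1 and let W_1, …, W_T be random variables on a common probability space (arbitrary joint dependence), each having the Beta(n+1−l, l) distribution. Then for every b > 1 with 1/(bT) < 1, E[min_{1 ≤ t ≤ T} W_t] ≥ I^{−1}(1/(bT); n+1−l, l) · (1 − 1/b). -/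
noncomputable section

open MeasureTheory
open scoped ENNReal

/-- Density of the Beta distribution with parameters `c, d > 0` (with respect to
Lebesgue measure), supported on `(0,1)`. -/
def betaPDF (c d : ℝ) (x : ℝ) : ℝ≥0∞ :=
  if 0 < x ∧ x < 1 then
    ENNReal.ofReal (Real.Gamma (c + d) / (Real.Gamma c * Real.Gamma d) *
      x ^ (c - 1) * (1 - x) ^ (d - 1))
  else 0

/-- The Beta distribution with parameters `c, d`. -/
def betaMeasure (c d : ℝ) : Measure ℝ :=
  volume.withDensity (betaPDF c d)

/-- `I(x; c, d)`: the cumulative distribution function of the Beta distribution. -/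
def betaCDF (c d x : ℝ) : ℝ := (betaMeasure c d (Set.Iic x)).toReal

/-- `I⁻¹(p; c, d)`: the (generalized) inverse of the Beta CDF; on `(0,1)` it is the
unique `a ∈ (0,1)` with `I(a; c, d) = p`, since the Beta CDF is continuous and
strictly increasing there. -/
def betaInvCDF (c d p : ℝ) : ℝ := sInf {x : ℝ | p ≤ betaCDF c d x}

lemma betaPDF_le (c d : ℝ) (hc : 1 ≤ c) (hd : 1 ≤ d) (x : ℝ) :
    betaPDF c d x ≤ ENNReal.ofReal (Real.Gamma (c + d) / (Real.Gamma c * Real.Gamma d)) := by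
  unfold betaPDF
  split_ifs with h
  · apply ENNReal.ofReal_le_ofReal
    have h1 : x ^ (c - 1) ≤ 1 :=
      Real.rpow_le_one h.1.le h.2.le (by linarith)
    have h2 : (1 - x) ^ (d - 1) ≤ 1 :=
      Real.rpow_le_one (by linarith) (by linarith) (by linarith)
    have hK : 0 ≤ Real.Gamma (c + d) / (Real.Gamma c * Real.Gamma d) := by
      apply div_nonneg (Real.Gamma_nonneg_of_nonneg (by linarith))
      exact mul_nonneg (Real.Gamma_nonneg_of_nonneg (by linarith))
        (Real.Gamma_nonneg_of_nonneg (by linarith))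
    have h1' : 0 ≤ x ^ (c - 1) := Real.rpow_nonneg h.1.le _
    calc Real.Gamma (c + d) / (Real.Gamma c * Real.Gamma d) * x ^ (c - 1) * (1 - x) ^ (d - 1)
        ≤ Real.Gamma (c + d) / (Real.Gamma c * Real.Gamma d) * x ^ (c - 1) * 1 := by
          exact mul_le_mul_of_nonneg_left h2 (mul_nonneg hK h1')
      _ = Real.Gamma (c + d) / (Real.Gamma c * Real.Gamma d) * x ^ (c - 1) := by ring
      _ ≤ Real.Gamma (c + d) / (Real.Gamma c * Real.Gamma d) * 1 :=
          mul_le_mul_of_nonneg_left h1 hK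
      _ = _ := by ring
  · exact zero_le

lemma betaPDF_eq_zero {c d x : ℝ} (hx : x ∉ Set.Ioo (0:ℝ) 1) : betaPDF c d x = 0 := by
  unfold betaPDF
  rw [if_neg]
  simpa [Set.mem_Ioo] using hx

lemma betaMeasure_apply (c d : ℝ) {s : Set ℝ} (hs : MeasurableSet s) :
    betaMeasure c d s = ∫⁻ x in s, betaPDF c d x := by
  rw [betaMeasure, withDensity_apply _ hs]

lemma betaMeasure_univ_lt_top (c d : ℝ) (hc : 1 ≤ c) (hd : 1 ≤ d) :
    betaMeasure c d Set.univ < ⊤ := by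
  set K := ENNReal.ofReal (Real.Gamma (c + d) / (Real.Gamma c * Real.Gamma d)) with hK
  have : betaMeasure c d Set.univ ≤ ∫⁻ x, (Set.Ioo (0:ℝ) 1).indicator (fun _ => K) x := by
    rw [betaMeasure_apply c d MeasurableSet.univ, Measure.restrict_univ]
    apply lintegral_mono
    intro x
    by_cases hx : x ∈ Set.Ioo (0:ℝ) 1
    · rw [Set.indicator_of_mem hx]; exact betaPDF_le c d hc hd x
    · rw [Set.indicator_of_notMem hx, betaPDF_eq_zero hx]
  rw [lintegral_indicator measurableSet_Ioo, setLIntegral_const] at this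
  refine lt_of_le_of_lt this ?_
  rw [Real.volume_Ioo]
  exact ENNReal.mul_lt_top ENNReal.ofReal_lt_top ENNReal.ofReal_lt_top

lemma betaMeasure_compl_Icc (c d : ℝ) : betaMeasure c d (Set.Icc (0:ℝ) 1)ᶜ = 0 := by
  rw [betaMeasure_apply c d measurableSet_Icc.compl]
  have h0 : ∀ x ∈ (Set.Icc (0:ℝ) 1)ᶜ, betaPDF c d x = (fun _ => (0:ℝ≥0∞)) x := by
    intro x hx
    exact betaPDF_eq_zero (fun hx' => hx ⟨hx'.1.le, hx'.2.le⟩)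
  rw [setLIntegral_congr_fun measurableSet_Icc.compl h0]
  exact lintegral_zero

/-- Key fact: the beta measure of `Iio (betaInvCDF c d p)` is at most `p`. -/
lemma betaMeasure_Iio_invCDF_le (c d p : ℝ) (hc : 1 ≤ c) (hd : 1 ≤ d) (hp : 0 < p) :
    betaMeasure c d (Set.Iio (betaInvCDF c d p)) ≤ ENNReal.ofReal p := by
  set a := betaInvCDF c d p with ha
  set S := {x : ℝ | p ≤ betaCDF c d x} with hS
  have hfin : ∀ y : ℝ, betaMeasure c d (Set.Iic y) ≠ ⊤ := fun y =>
    (lt_of_le_of_lt (measure_mono (Set.subset_univ _))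
      (betaMeasure_univ_lt_top c d hc hd)).ne
  have hbdd : BddBelow S := by
    refine ⟨0, fun y hy => ?_⟩
    by_contra hy0
    push_neg at hy0
    have h0 : betaMeasure c d (Set.Iic y) = 0 := by
      apply measure_mono_null _ (betaMeasure_compl_Icc c d)
      intro x hx
      simp only [Set.mem_Iic] at hx
      simp only [Set.mem_compl_iff, Set.mem_Icc, not_and_or, not_le]
      left; linarith
    have hcdf : betaCDF c d y = 0 := by rw [betaCDF, h0]; simp
    have hyS : p ≤ betaCDF c d y := hy
    rw [hcdf] at hyS
    exact absurd hyS (not_le.mpr hp)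
  have hIic : ∀ y : ℝ, y < a → betaMeasure c d (Set.Iic y) ≤ ENNReal.ofReal p := by
    intro y hy
    have hyS : y ∉ S := fun hmem => absurd (csInf_le hbdd hmem) (not_le.mpr hy)
    have : betaCDF c d y < p := lt_of_not_ge hyS
    have := this.le
    rw [betaCDF] at this
    calc betaMeasure c d (Set.Iic y)
        = ENNReal.ofReal (betaMeasure c d (Set.Iic y)).toReal :=
          (ENNReal.ofReal_toReal (hfin y)).symm
      _ ≤ ENNReal.ofReal p := ENNReal.ofReal_le_ofReal this
  have hunion : Set.Iio a = ⋃ n : ℕ, Set.Iic (a - 1 / (n + 1)) := by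
    ext x
    simp only [Set.mem_Iio, Set.mem_iUnion, Set.mem_Iic]
    constructor
    · intro hx
      obtain ⟨m, hm⟩ := exists_nat_one_div_lt (by linarith : (0:ℝ) < a - x)
      exact ⟨m, by linarith⟩
    · rintro ⟨m, hm⟩
      have : (0:ℝ) < 1 / (m + 1) := by positivity
      linarith
  rw [hunion]
  have hmono : Monotone (fun n : ℕ => Set.Iic (a - 1 / ((n:ℝ) + 1))) := by
    intro m k hmk
    apply Set.Iic_subset_Iic.mpr
    have h1 : (0:ℝ) < (m:ℝ) + 1 := by positivity
    have h2 : (m:ℝ) + 1 ≤ (k:ℝ) + 1 := by exact_mod_cast by omega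
    have := one_div_le_one_div_of_le h1 h2
    linarith
  rw [hmono.measure_iUnion]
  apply iSup_le
  intro m
  apply hIic
  have : (0:ℝ) < 1 / ((m:ℝ) + 1) := by positivity
  linarith


/-- **Proposition A1, Markov-type lower bound.**
If each `W_t` has the `Beta(n+1−l, l)` distribution (arbitrary joint dependence), with
`l = ⌊α(n+1)⌋`, then `E[min_t W_t] ≥ I⁻¹(1/(bT); n+1−l, l) · (1 − 1/b)`. -/
theorem expectation_min_beta_ge
    {Ω : Type*} [MeasurableSpace Ω] (P : Measure Ω) [IsProbabilityMeasure P]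
    (n : ℕ) (hn : 1 ≤ n) (α : ℝ) (hα : α ∈ Set.Ioo (0 : ℝ) 1)
    (l : ℕ) (hl : l = ⌊α * ((n : ℝ) + 1)⌋₊) (hl1 : 1 ≤ l) (hln : l ≤ n)
    (T : ℕ) (hT : 0 < T) (W : Fin T → Ω → ℝ) (hW : ∀ t, Measurable (W t))
    (hbeta : ∀ t, P.map (W t) = betaMeasure ((n : ℝ) + 1 - l) l)
    (b : ℝ) (hb : 1 < b) (hbT : 1 / (b * T) < 1) :
    betaInvCDF ((n : ℝ) + 1 - l) l (1 / (b * T)) * (1 - 1 / b) ≤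
      ∫ ω, (⨅ t, W t ω) ∂P := by
  set c : ℝ := (n : ℝ) + 1 - l with hcdef
  have hc1 : 1 ≤ c := by
    have hln' : (l:ℝ) ≤ n := by exact_mod_cast hln
    rw [hcdef]; linarith
  have hd1 : 1 ≤ (l:ℝ) := by exact_mod_cast hl1
  set p : ℝ := 1 / (b * T) with hpdef
  have hb0 : (0:ℝ) < b := lt_trans one_pos hb
  have hT0 : (0:ℝ) < T := by exact_mod_cast hT
  have hp0 : 0 < p := by rw [hpdef]; positivity
  have h1b : 0 ≤ 1 - 1/b := by
    have : 1/b < 1 := by rw [div_lt_one hb0]; exact hb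
    linarith
  set a : ℝ := betaInvCDF c l p with ha
  haveI : Nonempty (Fin T) := ⟨⟨0, hT⟩⟩
  -- each W t lies in [0,1] a.e.
  have hae : ∀ t : Fin T, ∀ᵐ ω ∂P, W t ω ∈ Set.Icc (0:ℝ) 1 := by
    intro t
    have h0 : P (W t ⁻¹' (Set.Icc (0:ℝ) 1)ᶜ) = 0 := by
      rw [← Measure.map_apply (hW t) measurableSet_Icc.compl, hbeta t]
      exact betaMeasure_compl_Icc _ _
    rw [ae_iff]
    exact h0
  have haeAll : ∀ᵐ ω ∂P, ∀ t, W t ω ∈ Set.Icc (0:ℝ) 1 := ae_all_iff.mpr hae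
  -- integrability of the infimum
  have hFm : Measurable fun ω => ⨅ t, W t ω := Measurable.iInf hW
  have hFint : Integrable (fun ω => ⨅ t, W t ω) P := by
    refine Integrable.mono' (integrable_const (1:ℝ)) hFm.aestronglyMeasurable ?_
    filter_upwards [haeAll] with ω hω
    have hbdd : BddBelow (Set.range fun t => W t ω) := by
      refine ⟨0, ?_⟩
      rintro x ⟨t, rfl⟩
      exact (hω t).1
    have h1 : 0 ≤ ⨅ t, W t ω := le_ciInf fun t => (hω t).1
    have h2 : (⨅ t, W t ω) ≤ 1 :=
      le_trans (ciInf_le hbdd (Classical.arbitrary (Fin T))) (hω _).2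
    rw [Real.norm_eq_abs, abs_le]
    constructor <;> linarith
  rcases le_or_gt a 0 with haneg | hapos
  · have hle : a * (1 - 1/b) ≤ 0 := mul_nonpos_of_nonpos_of_nonneg haneg h1b
    refine hle.trans (integral_nonneg_of_ae ?_)
    filter_upwards [haeAll] with ω hω
    exact le_ciInf fun t => (hω t).1
  · set S : Set Ω := ⋂ t, {ω | a ≤ W t ω} with hSdef
    have hSm : MeasurableSet S :=
      MeasurableSet.iInter fun t => measurableSet_le measurable_const (hW t)
    -- Step 1 : a · P(S) ≤ E[min]
    have step1 : (P S).toReal * a ≤ ∫ ω, ⨅ t, W t ω ∂P := by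
      have hmono : ∀ᵐ ω ∂P, S.indicator (fun _ => a) ω ≤ ⨅ t, W t ω := by
        filter_upwards [haeAll] with ω hω
        by_cases hωS : ω ∈ S
        · rw [Set.indicator_of_mem hωS]
          exact le_ciInf fun t => Set.mem_iInter.mp hωS t
        · rw [Set.indicator_of_notMem hωS]
          exact le_ciInf fun t => (hω t).1
      have hind : Integrable (S.indicator fun _ => a) P := (integrable_const a).indicator hSm
      have := integral_mono_ae hind hFint hmono
      rwa [integral_indicator_const _ hSm, smul_eq_mul] at this
    -- Step 2 : P(Sᶜ) ≤ 1/b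
    have hStc : P Sᶜ ≤ ENNReal.ofReal (1/b) := by
      have hSc : Sᶜ = ⋃ t, {ω | W t ω < a} := by
        rw [hSdef, Set.compl_iInter]
        apply Set.iUnion_congr
        intro t
        ext ω
        simp [not_le]
      rw [hSc]
      refine (measure_iUnion_le _).trans ?_
      have hterm : ∀ t : Fin T, P {ω | W t ω < a} ≤ ENNReal.ofReal p := by
        intro t
        have heq : {ω | W t ω < a} = W t ⁻¹' Set.Iio a := rfl
        rw [heq, ← Measure.map_apply (hW t) measurableSet_Iio, hbeta t]
        exact betaMeasure_Iio_invCDF_le c l p hc1 hd1 hp0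
      calc ∑' t : Fin T, P {ω | W t ω < a}
          ≤ ∑' _ : Fin T, ENNReal.ofReal p := ENNReal.tsum_le_tsum hterm
        _ = (T : ℝ≥0∞) * ENNReal.ofReal p := by
            rw [tsum_fintype, Finset.sum_const, Finset.card_univ, Fintype.card_fin,
              nsmul_eq_mul]
        _ = ENNReal.ofReal ((T : ℝ) * p) := by
            rw [← ENNReal.ofReal_natCast, ← ENNReal.ofReal_mul (by positivity)]
        _ = ENNReal.ofReal (1/b) := by
            congr 1
            rw [hpdef]
            field_simp
    have hPSc : (P Sᶜ).toReal ≤ 1/b :=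
      ENNReal.toReal_le_of_le_ofReal (by positivity) hStc
    have hadd : (P S).toReal + (P Sᶜ).toReal = 1 := by
      have := measure_add_measure_compl (μ := P) hSm
      have h' := congrArg ENNReal.toReal this
      rwa [ENNReal.toReal_add (measure_ne_top P S) (measure_ne_top P Sᶜ),
        measure_univ, ENNReal.toReal_one] at h'
    have hPS : 1 - 1/b ≤ (P S).toReal := by linarith
    calc a * (1 - 1/b) ≤ a * (P S).toReal := by
          exact mul_le_mul_of_nonneg_left hPS hapos.le
      _ = (P S).toReal * a := mul_comm _ _
      _ ≤ ∫ ω, ⨅ t, W t ω ∂P := step1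

end
end

section
/- (Step-function structure of the lower envelope of equal-curvature parabolas.) Let T ≥ 1 and, for each t ∈ {1, …, T}, let a_t, c_t ∈ ℝ and define f_t : ℝ → ℝ by f_t(y) = c_t + (y − a_t)². Then there exist an integer L with 1 ≤ L ≤ T, knots −∞ = k_0 < k_1 < … < k_{L−1} < k_L = +∞, and indices m_1, …, m_L ∈ {1, …, T} such that for every l ∈ {1, …, L} and every y in the interval (k_{l−1}, k_l), f_{m_l}(y) = min_{1 ≤ s ≤ T} f_s(y). In other words, there is a selection of the pointwise argmin of the family {f_t} that is constant on each of at most T intervals partitioning ℝ. -/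
/-- **step-function structure of the lower envelope of equal-curvature
parabolas.**  For the family `f_t(y) = c_t + (y − a_t)²`, there are `L ≤ T` intervals
with knots `−∞ = k₀ < k₁ < … < k_L = +∞` and indices `m_1, …, m_L` such that on the
`l`-th open interval the parabola `f_{m_l}` achieves the lower envelope. -/
theorem lower_envelope_parabolas_step_function
    (T : ℕ) (hT : 1 ≤ T) (a c : Fin T → ℝ) :
    ∃ (L : ℕ) (_ : 1 ≤ L ∧ L ≤ T) (k : Fin (L + 1) → EReal) (m : Fin L → Fin T),
      StrictMono k ∧ k 0 = ⊥ ∧ k (Fin.last L) = ⊤ ∧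
      ∀ (l : Fin L) (y : ℝ), k l.castSucc < (y : EReal) → (y : EReal) < k l.succ →
        c (m l) + (y - a (m l)) ^ 2 = ⨅ u : Fin T, (c u + (y - a u) ^ 2) := by
  classical
  haveI : NeZero T := ⟨by omega⟩
  set f : Fin T → ℝ → ℝ := fun t y => c t + (y - a t) ^ 2 with hf
  -- the set of minimizers at `y` is nonempty
  have hmin : ∀ y : ℝ, (Finset.univ.filter fun t => ∀ s, f t y ≤ f s y).Nonempty := by
    intro y
    obtain ⟨t, ht⟩ := Finite.exists_min (fun t => f t y)
    exact ⟨t, Finset.mem_filter.2 ⟨Finset.mem_univ _, ht⟩⟩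
  set m : ℝ → Fin T := fun y => (Finset.univ.filter fun t => ∀ s, f t y ≤ f s y).min' (hmin y)
    with hm
  have m_min : ∀ y s, f (m y) y ≤ f s y := fun y s =>
    (Finset.mem_filter.1 (Finset.min'_mem _ (hmin y))).2 s
  have m_least : ∀ y t, (∀ s, f t y ≤ f s y) → m y ≤ t := fun y t ht =>
    Finset.min'_le _ _ (Finset.mem_filter.2 ⟨Finset.mem_univ _, ht⟩)
  set g : ℝ → ℝ := fun y => a (m y) with hg
  -- monotonicity of the slope selection
  have L1 : ∀ {y1 y2 : ℝ}, y1 < y2 → g y1 ≤ g y2 := by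
    intro y1 y2 h
    by_contra hlt
    push_neg at hlt
    have h1 := m_min y1 (m y2)
    have h2 := m_min y2 (m y1)
    simp only [hf] at h1 h2
    simp only [hg] at hlt
    nlinarith [h1, h2, mul_pos (sub_pos.2 hlt) (sub_pos.2 h)]
  have gmono : Monotone g := by
    intro y1 y2 h
    rcases eq_or_lt_of_le h with rfl | h
    · exact le_rfl
    · exact L1 h
  -- equal slope value forces equal selection
  have L2 : ∀ {y1 y2 : ℝ}, y1 < y2 → g y1 = g y2 → m y1 = m y2 := by
    intro y1 y2 hlt heq
    have h1 := m_min y1 (m y2)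
    have h2 := m_min y2 (m y1)
    have ha : a (m y1) = a (m y2) := heq
    have hc : c (m y1) = c (m y2) := by
      simp only [hf] at h1 h2
      rw [ha] at h1 h2
      linarith
    have hfeq : ∀ z, f (m y1) z = f (m y2) z := fun z => by simp only [hf, ha, hc]
    have e1 : m y1 ≤ m y2 := m_least y1 _ (fun s => by rw [← hfeq y1]; exact m_min y1 s)
    have e2 : m y2 ≤ m y1 := m_least y2 _ (fun s => by rw [hfeq y2]; exact m_min y2 s)
    exact le_antisymm e1 e2
  have grange : ∀ y, g y ∈ Finset.image a Finset.univ := fun y =>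
    Finset.mem_image_of_mem a (Finset.mem_univ _)
  -- right local constancy
  have rconst : ∀ y : ℝ, ∃ y1, y < y1 ∧ ∀ z, y < z → z ≤ y1 → g z = g y1 := by
    intro y
    set S := (Finset.image a Finset.univ).filter
      (fun w => ∃ z, y < z ∧ z ≤ y + 1 ∧ g z = w) with hS
    have hSne : S.Nonempty :=
      ⟨g (y + 1), Finset.mem_filter.2 ⟨grange _, ⟨y + 1, by linarith, le_rfl, rfl⟩⟩⟩
    obtain ⟨z0, hz0a, hz0b, hz0c⟩ := (Finset.mem_filter.1 (S.min'_mem hSne)).2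
    refine ⟨z0, hz0a, fun z hz1 hz2 => ?_⟩
    have hle : g z ≤ g z0 := gmono hz2
    have hge : S.min' hSne ≤ g z :=
      Finset.min'_le _ _ (Finset.mem_filter.2 ⟨grange _, ⟨z, hz1, le_trans hz2 hz0b, rfl⟩⟩)
    rw [← hz0c] at hge
    linarith
  -- left local constancy
  have lconst : ∀ y : ℝ, ∃ y1, y1 < y ∧ ∀ z, y1 ≤ z → z < y → g z = g y1 := by
    intro y
    set S := (Finset.image a Finset.univ).filter
      (fun w => ∃ z, y - 1 ≤ z ∧ z < y ∧ g z = w) with hS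
    have hSne : S.Nonempty :=
      ⟨g (y - 1), Finset.mem_filter.2 ⟨grange _, ⟨y - 1, le_rfl, by linarith, rfl⟩⟩⟩
    obtain ⟨z0, hz0a, hz0b, hz0c⟩ := (Finset.mem_filter.1 (S.max'_mem hSne)).2
    refine ⟨z0, hz0b, fun z hz1 hz2 => ?_⟩
    have hle : g z0 ≤ g z := gmono hz1
    have hge : g z ≤ S.max' hSne :=
      Finset.le_max' _ _ (Finset.mem_filter.2 ⟨grange _, ⟨z, le_trans hz0a hz1, hz2, rfl⟩⟩)
    rw [← hz0c] at hge
    linarith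
  -- fat values
  set Fat : ℝ → Prop := fun w => ∃ y1 y2 : ℝ, y1 < y2 ∧ g y1 = w ∧ g y2 = w with hFat
  set V : Finset ℝ := (Finset.image a Finset.univ).filter Fat with hV
  have hVcard : V.card ≤ T := by
    calc V.card ≤ (Finset.image a Finset.univ).card := Finset.card_filter_le _ _
    _ ≤ (Finset.univ : Finset (Fin T)).card := Finset.card_image_le
    _ = T := by simp
  have hVne : V.Nonempty := by
    obtain ⟨y1, hy1, hcon⟩ := rconst 0
    exact ⟨g y1, Finset.mem_filter.2 ⟨grange y1,
      ⟨(0 + y1) / 2, y1, by linarith, hcon _ (by linarith) (by linarith), rfl⟩⟩⟩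
  set L := V.card with hLdef
  have hL1 : 1 ≤ L := Finset.card_pos.2 hVne
  have v : Fin L ≃o V := V.orderIsoOfFin rfl
  set vv : Fin L → ℝ := fun l => (v l : ℝ) with hvv
  have vmem : ∀ l, vv l ∈ V := fun l => (v l).2
  have vmono : StrictMono vv := fun i j h => Subtype.coe_lt_coe.2 ((v.lt_iff_lt).2 h)
  have vsurj : ∀ w ∈ V, ∃ j : Fin L, vv j = w := fun w hw =>
    ⟨v.symm ⟨w, hw⟩, by simp [hvv]⟩
  have vfat : ∀ l : Fin L, ∃ y1 y2 : ℝ, y1 < y2 ∧ g y1 = vv l ∧ g y2 = vv l := fun l =>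
    (Finset.mem_filter.1 (vmem l)).2
  -- knots
  set q : Fin L → EReal := fun l => sInf ((fun y : ℝ => (y : EReal)) '' {y : ℝ | g y = vv l})
    with hq
  have q_le : ∀ (l : Fin L) (y : ℝ), g y = vv l → q l ≤ (y : EReal) := fun l y hy =>
    sInf_le ⟨y, hy, rfl⟩
  have le_q : ∀ (l : Fin L) (x : EReal), (∀ y : ℝ, g y = vv l → x ≤ (y : EReal)) → x ≤ q l := by
    intro l x hx
    refine le_sInf ?_
    rintro _ ⟨y, hy, rfl⟩
    exact hx y hy
  have exists_lt : ∀ (l : Fin L) (y : ℝ), q l < (y : EReal) → ∃ z : ℝ, g z = vv l ∧ z < y := by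
    intro l y hy
    by_contra hno
    push_neg at hno
    have : (y : EReal) ≤ q l := le_q l _ (fun z hz => EReal.coe_le_coe_iff.2 (hno z hz))
    exact absurd hy (not_lt.2 this)
  set k : Fin (L + 1) → EReal := fun i => if h : (i : ℕ) < L then q ⟨i, h⟩ else ⊤ with hk
  have hkcast : ∀ l : Fin L, k l.castSucc = q l := by
    intro l
    simp only [hk, Fin.coe_castSucc, l.isLt, dif_pos]
  -- the key interval lemma
  have key : ∀ (l : Fin L) (y : ℝ), k l.castSucc < (y : EReal) → (y : EReal) < k l.succ →
      g y = vv l := by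
    intro l y h1 h2
    rw [hkcast] at h1
    obtain ⟨z, hz, hzy⟩ := exists_lt l y h1
    have hlow : vv l ≤ g y := hz ▸ gmono hzy.le
    refine le_antisymm ?_ hlow
    by_contra hgt
    push_neg at hgt
    obtain ⟨y1, hy1, hcon⟩ := rconst y
    have hwV : g y1 ∈ V := Finset.mem_filter.2 ⟨grange _,
      ⟨(y + y1) / 2, y1, by linarith, hcon _ (by linarith) (by linarith), rfl⟩⟩
    have hwgt : vv l < g y1 := lt_of_lt_of_le hgt (gmono hy1.le)
    obtain ⟨j, hj⟩ := vsurj _ hwV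
    have hlj : l < j := by
      by_contra hle
      push_neg at hle
      exact absurd (hj ▸ hwgt) (not_lt.2 (vmono.monotone hle))
    have hsuccL : (l : ℕ) + 1 < L := lt_of_le_of_lt hlj j.isLt
    set lsucc : Fin L := ⟨(l : ℕ) + 1, hsuccL⟩ with hlsucc
    have hk2 : k l.succ = q lsucc := by
      simp only [hk, Fin.val_succ, hsuccL, dif_pos]
      rfl
    rw [hk2] at h2
    have hvnext : vv lsucc ≤ vv j := vmono.monotone hlj
    obtain ⟨r, hr1, hr2⟩ := EReal.exists_between_coe_real h2
    have hyr : y < r := EReal.coe_lt_coe_iff.1 hr1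
    set z0 : ℝ := min ((y + r) / 2) ((y + y1) / 2) with hz0
    have hz0y : y < z0 := lt_min (by linarith) (by linarith)
    have hz0y1 : z0 ≤ y1 := le_trans (min_le_right _ _) (by linarith)
    have hz0r : z0 < r := lt_of_le_of_lt (min_le_left _ _) (by linarith)
    have hgz0 : g z0 = g y1 := hcon z0 hz0y hz0y1
    have hge : vv lsucc ≤ g z0 := by rw [hgz0, ← hj]; exact hvnext
    rcases eq_or_lt_of_le hge with heq | hlt2
    · have : q lsucc ≤ (z0 : EReal) := q_le lsucc z0 heq.symm
      have : q lsucc < q lsucc :=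
        lt_of_le_of_lt (this.trans (EReal.coe_le_coe_iff.2 hz0r.le)) hr2
      exact absurd this (lt_irrefl _)
    · obtain ⟨w1, w2, hw12, hgw1, _⟩ := vfat lsucc
      have hw1z0 : w1 < z0 := by
        by_contra hwc
        push_neg at hwc
        have := gmono hwc
        rw [hgw1] at this
        exact absurd (lt_of_lt_of_le hlt2 this) (lt_irrefl _)
      have : q lsucc ≤ (w1 : EReal) := q_le lsucc w1 hgw1
      have : q lsucc < q lsucc :=
        lt_of_le_of_lt (this.trans (EReal.coe_le_coe_iff.2 (hw1z0.trans hz0r).le)) hr2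
      exact absurd this (lt_irrefl _)
  -- k 0 = ⊥
  have hq0 : q ⟨0, hL1⟩ = ⊥ := by
    by_contra hne
    have hbot : (⊥ : EReal) < q ⟨0, hL1⟩ := bot_lt_iff_ne_bot.2 hne
    obtain ⟨r, _, hr2⟩ := EReal.exists_between_coe_real hbot
    obtain ⟨y1, hy1r, hcon⟩ := lconst r
    have hylt : ∀ z : ℝ, g z = vv ⟨0, hL1⟩ → y1 < z := by
      intro z hzv
      by_contra hzc
      push_neg at hzc
      have : q ⟨0, hL1⟩ ≤ (z : EReal) := q_le _ z hzv
      have : q ⟨0, hL1⟩ < q ⟨0, hL1⟩ :=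
        lt_of_le_of_lt (this.trans (EReal.coe_le_coe_iff.2 (hzc.trans hy1r.le))) hr2
      exact absurd this (lt_irrefl _)
    have hglt : g y1 < vv ⟨0, hL1⟩ := by
      obtain ⟨w1, w2, _, hgw1, _⟩ := vfat ⟨0, hL1⟩
      have hlt := hylt w1 hgw1
      have := gmono hlt.le
      rw [hgw1] at this
      rcases lt_or_eq_of_le this with h | h
      · exact h
      · exact absurd (hylt y1 h) (lt_irrefl _)
    have hwV : g y1 ∈ V := Finset.mem_filter.2 ⟨grange _,
      ⟨y1, (y1 + r) / 2, by linarith, rfl, hcon _ (by linarith) (by linarith)⟩⟩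
    obtain ⟨j, hj⟩ := vsurj _ hwV
    have : vv ⟨0, hL1⟩ ≤ vv j := vmono.monotone (by simp [Fin.le_def])
    rw [hj] at this
    exact absurd (lt_of_le_of_lt this hglt) (lt_irrefl _)
  have hk0 : k 0 = ⊥ := by
    simp only [hk]
    rw [dif_pos (show ((0 : Fin (L + 1)) : ℕ) < L by simp; omega)]
    simpa using hq0
  -- k last = ⊤
  have hklast : k (Fin.last L) = ⊤ := by
    simp only [hk, Fin.val_last]
    rw [dif_neg (lt_irrefl L)]
  -- strict monotonicity
  have hkmono : StrictMono k := by
    rw [Fin.strictMono_iff_lt_succ]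
    intro i
    rw [hkcast]
    obtain ⟨y1, y2, hy12, hgy1, hgy2⟩ := vfat i
    have hqy1 : q i ≤ (y1 : EReal) := q_le i y1 hgy1
    by_cases hiL : (i : ℕ) + 1 < L
    · have : k i.succ = q ⟨(i : ℕ) + 1, hiL⟩ := by
        simp only [hk, Fin.val_succ, hiL, dif_pos]
      rw [this]
      have hy2q : (y2 : EReal) ≤ q ⟨(i : ℕ) + 1, hiL⟩ := by
        refine le_q _ _ (fun z hz => ?_)
        refine EReal.coe_le_coe_iff.2 ?_
        by_contra hzc
        push_neg at hzc
        have hmono := gmono hzc.le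
        rw [hz, hgy2] at hmono
        have : vv i < vv ⟨(i : ℕ) + 1, hiL⟩ := vmono (by simp [Fin.lt_def])
        exact absurd (lt_of_lt_of_le this hmono) (lt_irrefl _)
      calc q i ≤ (y1 : EReal) := hqy1
        _ < (y2 : EReal) := EReal.coe_lt_coe_iff.2 hy12
        _ ≤ _ := hy2q
    · have : k i.succ = ⊤ := by
        simp only [hk, Fin.val_succ]
        rw [dif_neg hiL]
      rw [this]
      exact lt_of_le_of_lt hqy1 (EReal.coe_lt_top y1)
  -- choose a sample point in each open interval
  have hsample : ∀ l : Fin L, ∃ y : ℝ, k l.castSucc < (y : EReal) ∧ (y : EReal) < k l.succ := by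
    intro l
    exact EReal.exists_between_coe_real (hkmono (@Fin.castSucc_lt_succ _ l))
  choose ys hys1 hys2 using hsample
  refine ⟨L, ⟨hL1, hVcard⟩, k, fun l => m (ys l), hkmono, hk0, hklast, ?_⟩
  intro l y hy1 hy2
  show c (m (ys l)) + (y - a (m (ys l))) ^ 2 = ⨅ u : Fin T, (c u + (y - a u) ^ 2)
  have hgy : g y = vv l := key l y hy1 hy2
  have hgys : g (ys l) = vv l := key l (ys l) (hys1 l) (hys2 l)
  have hmeq : m (ys l) = m y := by
    rcases lt_trichotomy y (ys l) with h | h | h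
    · exact (L2 h (hgy.trans hgys.symm)).symm
    · rw [h]
    · exact L2 h (hgys.trans hgy.symm)
  rw [hmeq]
  have hbdd : BddBelow (Set.range fun u => c u + (y - a u) ^ 2) := by
    refine ⟨c (m y) + (y - a (m y)) ^ 2, ?_⟩
    rintro x ⟨u, rfl⟩
    exact m_min y u
  refine le_antisymm (le_ciInf (fun u => m_min y u)) (ciInf_le hbdd (m y))
end
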